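/- arXiv:2108.07630 — 5 statements merged into one kernel-verified Lean document; each statement's English description precedes it below -/
import Mathlib

section
/- Let X̃_1,…,X̃_m be i.i.d. random points in ℝ^p whose common distribution is symmetric about the origin. Suppose that for some ξ, Υ > 0 the quantity ρ := sup_{v ∈ 𝕊^{p−1}} ℙ(|⟨v, X̃⟩| ≤ 2ξ)/2 + ℙ(‖X̃‖₂ ≥ Υ) satisfies ρ < 1/2. Then ℙ( ξ𝔹₂^p ⊄ conv(X̃_1, …, X̃_m) ) ≤ (1 + 2Υ/ξ)^p (1/2 + ρ)^m. -/
open MeasureTheory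
open scoped ENNReal

noncomputable section

section Helpers
open Metric Set Module
open scoped RealInnerProductSpace

/-- Packing bound: any ε-separated finite subset of the unit sphere has card ≤ (1+2/ε)^p. -/
lemma packing_card_le {p : ℕ} {ε : ℝ} (hε : 0 < ε) (F : Finset (EuclideanSpace ℝ (Fin p)))
    (hFS : ∀ u ∈ F, ‖u‖ = 1)
    (hsep : ∀ u ∈ F, ∀ v ∈ F, u ≠ v → ε ≤ dist u v) :
    (F.card : ℝ) ≤ (1 + 2 / ε) ^ p := by
  have hε2 : (0:ℝ) < ε / 2 := by linarith
  set V : ℝ≥0∞ := volume (ball (0 : EuclideanSpace ℝ (Fin p)) 1) with hV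
  have hVpos : 0 < V := measure_ball_pos _ _ one_pos
  have hVfin : V < ⊤ := measure_ball_lt_top
  -- balls are pairwise disjoint
  have hdisj : (F : Set (EuclideanSpace ℝ (Fin p))).PairwiseDisjoint
      (fun u => ball u (ε / 2)) := by
    intro u hu v hv huv
    apply ball_disjoint_ball
    rw [dist_eq_norm] at *
    calc ε / 2 + ε / 2 = ε := by ring
      _ ≤ dist u v := hsep u hu v hv huv
  -- union is contained in big ball
  have hsub : (⋃ u ∈ F, ball u (ε / 2)) ⊆ ball (0 : EuclideanSpace ℝ (Fin p)) (1 + ε / 2) := by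
    intro x hx
    simp only [mem_iUnion, exists_prop] at hx
    obtain ⟨u, hu, hxu⟩ := hx
    have : dist x (0 : EuclideanSpace ℝ (Fin p)) ≤ dist x u + dist u 0 := dist_triangle _ _ _
    have hu1 : dist u (0 : EuclideanSpace ℝ (Fin p)) = 1 := by
      rw [dist_zero_right]; exact hFS u hu
    rw [mem_ball] at hxu ⊢
    rw [hu1] at this; linarith
  have hmeas : ∀ u ∈ F, MeasurableSet (ball u (ε / 2)) := fun u _ => measurableSet_ball
  have hsum : ∑ u ∈ F, volume (ball u (ε / 2)) ≤
      volume (ball (0 : EuclideanSpace ℝ (Fin p)) (1 + ε / 2)) := by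
    rw [← measure_biUnion_finset hdisj hmeas]
    exact measure_mono hsub
  have hrank : finrank ℝ (EuclideanSpace ℝ (Fin p)) = p := finrank_euclideanSpace_fin
  have hb1 : ∀ u : EuclideanSpace ℝ (Fin p), volume (ball u (ε / 2)) =
      ENNReal.ofReal ((ε/2) ^ p) * V := by
    intro u
    rw [Measure.addHaar_ball_of_pos _ u hε2, hrank]
  have hb2 : volume (ball (0 : EuclideanSpace ℝ (Fin p)) (1 + ε / 2)) =
      ENNReal.ofReal ((1 + ε/2) ^ p) * V := by
    rw [Measure.addHaar_ball_of_pos _ _ (by linarith : (0:ℝ) < 1 + ε/2), hrank]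
  rw [hb2] at hsum
  simp only [hb1, Finset.sum_const, nsmul_eq_mul] at hsum
  -- cancel V
  have hcancel : (F.card : ℝ≥0∞) * ENNReal.ofReal ((ε/2) ^ p) ≤ ENNReal.ofReal ((1 + ε/2) ^ p) := by
    rw [← mul_assoc] at hsum
    exact (ENNReal.mul_le_mul_iff_left hVpos.ne' hVfin.ne).mp hsum
  have hpow : (0:ℝ) < (ε/2) ^ p := pow_pos hε2 p
  have hreal : (F.card : ℝ) * (ε/2) ^ p ≤ (1 + ε/2) ^ p := by
    have := hcancel
    rw [← ENNReal.ofReal_natCast, ← ENNReal.ofReal_mul (by positivity)] at this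
    have := (ENNReal.ofReal_le_ofReal_iff (by positivity)).mp this
    exact this
  have key : (1 + ε/2) ^ p = (1 + 2/ε) ^ p * (ε/2) ^ p := by
    rw [← mul_pow]
    congr 1
    field_simp
    ring
  rw [key] at hreal
  exact le_of_mul_le_mul_right hreal hpow

lemma exists_net {p : ℕ} {ε : ℝ} (hε : 0 < ε) :
    ∃ F : Finset (EuclideanSpace ℝ (Fin p)), (∀ u ∈ F, ‖u‖ = 1) ∧
      (F.card : ℝ) ≤ (1 + 2 / ε) ^ p ∧
      ∀ v : EuclideanSpace ℝ (Fin p), ‖v‖ = 1 → ∃ u ∈ F, dist v u ≤ ε := by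
  classical
  set C : ℕ := ⌈(1 + 2 / ε) ^ p⌉₊ with hC
  set Q : ℕ → Prop := fun n => ∃ F : Finset (EuclideanSpace ℝ (Fin p)),
    (∀ u ∈ F, ‖u‖ = 1) ∧ (∀ u ∈ F, ∀ v ∈ F, u ≠ v → ε ≤ dist u v) ∧ F.card = n with hQ
  have hQ0 : Q 0 := ⟨∅, by simp, by simp, rfl⟩
  have hbound : ∀ n, Q n → n ≤ C := by
    rintro n ⟨F, hFS, hsep, rfl⟩
    have h1 : (F.card : ℝ) ≤ (1 + 2 / ε) ^ p := packing_card_le hε F hFS hsep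
    have h2 : ((1 + 2 / ε) ^ p : ℝ) ≤ C := Nat.le_ceil _
    exact_mod_cast h1.trans h2
  -- greatest n ≤ C with Q n
  set n₀ := Nat.findGreatest Q C with hn₀
  have hQn₀ : Q n₀ := Nat.findGreatest_spec (Nat.zero_le C) hQ0
  obtain ⟨F, hFS, hsep, hcard⟩ := hQn₀
  refine ⟨F, hFS, ?_, ?_⟩
  · exact packing_card_le hε F hFS hsep
  · intro v hv
    by_contra hcon
    push_neg at hcon
    have hvF : v ∉ F := fun hvF => by
      have := hcon v hvF
      simp only [dist_self] at this
      linarith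
    have hQ' : Q (n₀ + 1) := by
      refine ⟨insert v F, ?_, ?_, by rw [Finset.card_insert_of_notMem hvF, hcard]⟩
      · intro u hu
        rcases Finset.mem_insert.mp hu with rfl | hu
        · exact hv
        · exact hFS u hu
      · intro u hu w hw huw
        rcases Finset.mem_insert.mp hu with hu' | hu' <;>
          rcases Finset.mem_insert.mp hw with hw' | hw'
        · exact absurd (hu'.trans hw'.symm) huw
        · subst hu'; exact le_of_lt (hcon w hw')
        · subst hw'; rw [dist_comm]; exact le_of_lt (hcon u hu')
        · exact hsep u hu' w hw' huw
    have := Nat.le_findGreatest (hbound _ hQ') hQ'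
    omega

lemma exists_separating_unit {p m : ℕ} (hp : 0 < p) {ξ : ℝ} (hξ : 0 < ξ)
    (s : Fin m → EuclideanSpace ℝ (Fin p))
    (h : ¬ closedBall (0 : EuclideanSpace ℝ (Fin p)) ξ ⊆ convexHull ℝ (range s)) :
    ∃ v : EuclideanSpace ℝ (Fin p), ‖v‖ = 1 ∧ ∀ i, ⟪v, s i⟫ ≤ ξ := by
  haveI : Nonempty (Fin p) := ⟨⟨0, hp⟩⟩
  haveI : Nontrivial (EuclideanSpace ℝ (Fin p)) := by
    apply nontrivial_of_ne (EuclideanSpace.single ⟨0, hp⟩ (1:ℝ)) 0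
    intro hcontra
    have := congrFun (congrArg WithLp.ofLp hcontra) ⟨0, hp⟩
    simp [EuclideanSpace.single_apply] at this
  rcases isEmpty_or_nonempty (Fin m) with hm | hm
  · obtain ⟨v, hv⟩ := exists_norm_eq (EuclideanSpace ℝ (Fin p)) zero_le_one
    exact ⟨v, hv, fun i => (hm.false i).elim⟩
  · obtain ⟨y, hy, hyK⟩ := not_subset.mp h
    set K := convexHull ℝ (range s) with hK
    have hKconv : Convex ℝ K := convex_convexHull ℝ _
    have hKclosed : IsClosed K := ((Set.finite_range s).isCompact_convexHull ℝ).isClosed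
    obtain ⟨f, u, hfu, huy⟩ := geometric_hahn_banach_closed_point hKconv hKclosed hyK
    set v₀ := (InnerProductSpace.toDual ℝ (EuclideanSpace ℝ (Fin p))).symm f with hv₀
    have hfv₀ : ∀ x, ⟪v₀, x⟫ = f x := fun x => InnerProductSpace.toDual_symm_apply
    have hv₀ne : v₀ ≠ 0 := by
      intro h0
      obtain ⟨i⟩ := hm
      have h1 : f (s i) < u := hfu (s i) (subset_convexHull ℝ _ (mem_range_self i))
      have h2 : f (s i) = 0 := by rw [← hfv₀, h0, inner_zero_left]
      have h3 : f y = 0 := by rw [← hfv₀, h0, inner_zero_left]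
      rw [h2] at h1; rw [h3] at huy; linarith
    set v : EuclideanSpace ℝ (Fin p) := ‖v₀‖⁻¹ • v₀ with hv
    have hnv₀ : 0 < ‖v₀‖ := norm_pos_iff.mpr hv₀ne
    refine ⟨v, ?_, ?_⟩
    · rw [hv, norm_smul, norm_inv, norm_norm, inv_mul_cancel₀ hnv₀.ne']
    · intro i
      have h1 : f (s i) < u := hfu (s i) (subset_convexHull ℝ _ (mem_range_self i))
      have h2 : ⟪v, s i⟫ = ‖v₀‖⁻¹ * f (s i) := by
        rw [hv, real_inner_smul_left, hfv₀]
      have h3 : ⟪v, y⟫ = ‖v₀‖⁻¹ * f y := by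
        rw [hv, real_inner_smul_left, hfv₀]
      have h4 : ⟪v, y⟫ ≤ ‖v‖ * ‖y‖ := real_inner_le_norm _ _
      have hvn : ‖v‖ = 1 := by rw [hv, norm_smul, norm_inv, norm_norm, inv_mul_cancel₀ hnv₀.ne']
      have hyn : ‖y‖ ≤ ξ := mem_closedBall_zero_iff.mp hy
      have h5 : ‖v₀‖⁻¹ * f (s i) < ‖v₀‖⁻¹ * f y := by
        apply mul_lt_mul_of_pos_left _ (inv_pos.mpr hnv₀)
        linarith
      rw [h2]
      refine le_of_lt ?_
      calc ‖v₀‖⁻¹ * f (s i) < ‖v₀‖⁻¹ * f y := h5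
        _ = ⟪v, y⟫ := h3.symm
        _ ≤ ‖v‖ * ‖y‖ := h4
        _ ≤ ξ := by rw [hvn, one_mul]; exact hyn

lemma measurable_lincomb {p : ℕ} (v : EuclideanSpace ℝ (Fin p)) :
    Measurable (fun x : EuclideanSpace ℝ (Fin p) => ∑ j, v j * x j) := by
  apply Continuous.measurable
  apply continuous_finset_sum
  intro j _
  exact (continuous_const.mul (EuclideanSpace.proj j).continuous)

lemma half_bound {p : ℕ} (μ : Measure (EuclideanSpace ℝ (Fin p))) [IsProbabilityMeasure μ]
    (hsym : Measure.map (fun x => -x) μ = μ) {c : ℝ} (hc : 0 ≤ c)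
    (v : EuclideanSpace ℝ (Fin p)) :
    (μ {x | ∑ j, v j * x j ≤ c}).toReal ≤
      1/2 + (μ {x | |∑ j, v j * x j| ≤ c}).toReal / 2 := by
  set f : EuclideanSpace ℝ (Fin p) → ℝ := fun x => ∑ j, v j * x j with hf
  have hfm : Measurable f := measurable_lincomb v
  have hmA : MeasurableSet {x | f x < -c} := hfm measurableSet_Iio
  have hmB : MeasurableSet {x | c < f x} := hfm measurableSet_Ioi
  have hmC : MeasurableSet {x | |f x| ≤ c} := (hfm.abs) measurableSet_Iic
  -- symmetry: μ {f < -c} = μ {c < f}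
  have hneg : Measurable (fun x : EuclideanSpace ℝ (Fin p) => -x) := by
    exact continuous_neg.measurable
  have hsymm : μ {x | f x < -c} = μ {x | c < f x} := by
    conv_lhs => rw [← hsym]
    rw [Measure.map_apply hneg hmA]
    congr 1
    ext x
    simp only [Set.mem_preimage, Set.mem_setOf_eq, hf]
    have : (∑ j, v j * (-x) j) = -∑ j, v j * x j := by
      rw [← Finset.sum_neg_distrib]
      refine Finset.sum_congr rfl fun j _ => ?_
      simp only [PiLp.neg_apply, mul_neg]
    rw [this]
    constructor <;> intro h <;> linarith
  -- partition
  have hpart : μ {x | f x < -c} + μ {x | |f x| ≤ c} + μ {x | c < f x} = 1 := by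
    rw [← measure_union, ← measure_union]
    · have : ({x | f x < -c} ∪ {x | |f x| ≤ c}) ∪ {x | c < f x} = univ := by
        ext x; simp only [Set.mem_union, Set.mem_setOf_eq, Set.mem_univ, iff_true, abs_le]
        by_cases h1 : f x < -c
        · tauto
        · by_cases h2 : c < f x
          · tauto
          · left; right; constructor <;> linarith
      rw [this, measure_univ]
    · rw [Set.disjoint_left]
      intro x hx hx'
      simp only [Set.mem_union, Set.mem_setOf_eq, abs_le] at hx hx'
      rcases hx with hx | ⟨h1, h2⟩ <;> linarith
    · exact hmB
    · rw [Set.disjoint_left]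
      intro x hx hx'
      simp only [Set.mem_setOf_eq, abs_le] at hx hx'
      obtain ⟨h1, h2⟩ := hx'
      linarith
    · exact hmC
  -- decompose {f ≤ c}
  have hdec : μ {x | f x ≤ c} = μ {x | f x < -c} + μ {x | |f x| ≤ c} := by
    rw [← measure_union]
    · congr 1
      ext x
      simp only [Set.mem_union, Set.mem_setOf_eq, abs_le]
      constructor
      · intro h
        by_cases h1 : f x < -c
        · exact Or.inl h1
        · exact Or.inr ⟨by linarith, h⟩
      · rintro (h | ⟨h1, h2⟩)
        · linarith
        · exact h2
    · rw [Set.disjoint_left]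
      intro x hx hx'
      simp only [Set.mem_setOf_eq, abs_le] at hx hx'
      obtain ⟨h1, h2⟩ := hx'
      linarith
    · exact hmC
  -- to reals
  have hfin : ∀ S : Set (EuclideanSpace ℝ (Fin p)), μ S ≠ ⊤ :=
    fun S => (measure_lt_top μ S).ne
  have hA := (μ {x | f x < -c}).toReal
  have htR : (μ {x | f x < -c}).toReal + (μ {x | |f x| ≤ c}).toReal
      + (μ {x | c < f x}).toReal = 1 := by
    rw [← ENNReal.toReal_add (hfin _) (hfin _), ← ENNReal.toReal_add (by
      exact ENNReal.add_ne_top.mpr ⟨hfin _, hfin _⟩) (hfin _), hpart, ENNReal.toReal_one]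
  have hsR : (μ {x | f x < -c}).toReal = (μ {x | c < f x}).toReal := by rw [hsymm]
  have hdR : (μ {x | f x ≤ c}).toReal
      = (μ {x | f x < -c}).toReal + (μ {x | |f x| ≤ c}).toReal := by
    rw [hdec, ENNReal.toReal_add (hfin _) (hfin _)]
  rw [hdR]
  linarith


end Helpers

section Main
open Metric Set Module
open scoped RealInnerProductSpace

/- STATEMENT 2 (Theorem `lemma:wendel_v3`).
X̃_1,…,X̃_m i.i.d. with common law μ symmetric about 0.  If
ρ := sup_{v ∈ 𝕊^{p−1}} ℙ(|⟨v,X̃⟩| ≤ 2ξ)/2 + ℙ(‖X̃‖ ≥ Υ) < 1/2, then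
ℙ(ξ𝔹₂^p ⊄ conv(X̃_1,…,X̃_m)) ≤ (1 + 2Υ/ξ)^p (1/2 + ρ)^m. -/
theorem ball_in_convex_hull_of_iid_symmetric {p m : ℕ}
    (ξ Υ : ℝ) (hξ : 0 < ξ) (hΥ : 0 < Υ)
    (μ : Measure (EuclideanSpace ℝ (Fin p))) [IsProbabilityMeasure μ]
    (hsym : Measure.map (fun x => -x) μ = μ)
    (ρ : ℝ)
    (hρdef : ρ = (⨆ v : Metric.sphere (0 : EuclideanSpace ℝ (Fin p)) 1,
        (μ {x | |∑ j, (v : EuclideanSpace ℝ (Fin p)) j * x j| ≤ 2 * ξ}).toReal / 2)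
      + (μ {x | Υ ≤ ‖x‖}).toReal)
    (hρ : ρ < 1 / 2) :
    (Measure.pi fun _ : Fin m => μ)
      {s | ¬ Metric.closedBall (0 : EuclideanSpace ℝ (Fin p)) ξ ⊆
            convexHull ℝ (Set.range s)} ≤
      ENNReal.ofReal ((1 + 2 * Υ / ξ) ^ p * (1 / 2 + ρ) ^ m) := by
  classical
  set E := EuclideanSpace ℝ (Fin p)
  set P := (Measure.pi fun _ : Fin m => μ) with hP
  haveI : IsProbabilityMeasure P := by rw [hP]; infer_instance
  rcases Nat.eq_zero_or_pos p with hp0 | hp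
  · -- degenerate case p = 0
    subst hp0
    haveI : Subsingleton (EuclideanSpace ℝ (Fin 0)) := by
      constructor; intro a b; ext j; exact absurd j.2 (Nat.not_lt_zero _)
    have hρ0 : ρ = 0 := by
      rw [hρdef]
      haveI : IsEmpty (Metric.sphere (0 : EuclideanSpace ℝ (Fin 0)) 1) := by
        constructor
        rintro ⟨x, hx⟩
        rw [mem_sphere_zero_iff_norm] at hx
        have : x = 0 := Subsingleton.elim _ _
        rw [this, norm_zero] at hx
        norm_num at hx
      rw [Real.iSup_of_isEmpty]
      have : {x : EuclideanSpace ℝ (Fin 0) | Υ ≤ ‖x‖} = ∅ := by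
        ext x
        have : x = 0 := Subsingleton.elim _ _
        simp [this, not_le, hΥ]
      rw [this]
      simp
    subst hρ0
    rcases Nat.eq_zero_or_pos m with hm0 | hm
    · subst hm0
      have hle : P {s | ¬ Metric.closedBall (0 : EuclideanSpace ℝ (Fin 0)) ξ ⊆
            convexHull ℝ (Set.range s)} ≤ 1 := prob_le_one
      refine hle.trans ?_
      norm_num
    · -- m ≥ 1: every s covers
      have : {s : Fin m → EuclideanSpace ℝ (Fin 0) | ¬ Metric.closedBall (0 : EuclideanSpace ℝ (Fin 0)) ξ ⊆
            convexHull ℝ (Set.range s)} = ∅ := by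
        ext s
        simp only [Set.mem_setOf_eq, Set.mem_empty_iff_false, iff_false, not_not]
        intro x _
        have : x = s ⟨0, hm⟩ := Subsingleton.elim _ _
        rw [this]
        exact subset_convexHull ℝ _ (mem_range_self _)
      rw [this, measure_empty]
      positivity
  · -- main case p ≥ 1
    set ε : ℝ := ξ / Υ with hε
    have hεpos : 0 < ε := div_pos hξ hΥ
    obtain ⟨F, hFS, hFcard, hFcover⟩ := exists_net (p := p) hεpos
    -- the single-point bad sets
    set B : EuclideanSpace ℝ (Fin p) → Set (EuclideanSpace ℝ (Fin p)) :=
      fun u => {x | (∑ j, u j * x j) ≤ 2*ξ} ∪ {x | Υ ≤ ‖x‖} with hB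
    have hBmeas : ∀ u, MeasurableSet (B u) := by
      intro u
      exact ((measurable_lincomb u) measurableSet_Iic).union
        (measurable_norm measurableSet_Ici)
    -- inclusion of bad event in union
    have hincl : {s : Fin m → EuclideanSpace ℝ (Fin p) |
        ¬ Metric.closedBall (0 : EuclideanSpace ℝ (Fin p)) ξ ⊆ convexHull ℝ (Set.range s)}
        ⊆ ⋃ u ∈ F, Set.pi Set.univ (fun _ : Fin m => B u) := by
      intro s hs
      obtain ⟨v, hv1, hvs⟩ := exists_separating_unit hp hξ s hs
      obtain ⟨u, huF, hudist⟩ := hFcover v hv1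
      simp only [Set.mem_iUnion, exists_prop]
      refine ⟨u, huF, ?_⟩
      intro i _
      by_cases hni : Υ ≤ ‖s i‖
      · exact Or.inr hni
      · left
        push_neg at hni
        have hinner : (∑ j, u j * (s i) j) = ⟪u, s i⟫ := by
          rw [PiLp.inner_apply]
          simp [RCLike.inner_apply, conj_trivial]
          exact Finset.sum_congr rfl fun j _ => mul_comm _ _
        rw [Set.mem_setOf_eq, hinner]
        have hsplit : ⟪u, s i⟫ = ⟪v, s i⟫ + ⟪u - v, s i⟫ := by
          rw [inner_sub_left]; ring
        have hcs : ⟪u - v, s i⟫ ≤ ‖u - v‖ * ‖s i‖ := real_inner_le_norm _ _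
        have hdist : ‖u - v‖ ≤ ε := by
          rw [← dist_eq_norm, dist_comm]
          exact hudist
        have h1 : ‖u - v‖ * ‖s i‖ ≤ ε * Υ := by
          apply mul_le_mul hdist (le_of_lt hni) (norm_nonneg _) (le_of_lt hεpos)
        have h2 : ε * Υ = ξ := by rw [hε]; field_simp
        rw [hsplit]
        have := hvs i
        linarith
    -- probability of each bad set
    have hρ1 : ∀ u ∈ F, (μ {x | |∑ j, u j * x j| ≤ 2*ξ}).toReal / 2 ≤
        (⨆ v : Metric.sphere (0 : EuclideanSpace ℝ (Fin p)) 1,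
          (μ {x | |∑ j, (v : EuclideanSpace ℝ (Fin p)) j * x j| ≤ 2 * ξ}).toReal / 2) := by
      intro u huF
      have humem : u ∈ Metric.sphere (0 : EuclideanSpace ℝ (Fin p)) 1 :=
        mem_sphere_zero_iff_norm.mpr (hFS u huF)
      have hbdd : BddAbove (Set.range (fun v : Metric.sphere (0 : EuclideanSpace ℝ (Fin p)) 1 =>
          (μ {x | |∑ j, (v : EuclideanSpace ℝ (Fin p)) j * x j| ≤ 2 * ξ}).toReal / 2)) := by
        refine ⟨1/2, ?_⟩
        rintro y ⟨w, rfl⟩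
        have h1 : μ {x | |∑ j, (w : EuclideanSpace ℝ (Fin p)) j * x j| ≤ 2 * ξ} ≤ 1 := prob_le_one
        have := ENNReal.toReal_mono ENNReal.one_ne_top h1
        rw [ENNReal.toReal_one] at this
        linarith
      exact le_ciSup hbdd (⟨u, humem⟩ : Metric.sphere (0 : EuclideanSpace ℝ (Fin p)) 1)
    have hμB : ∀ u ∈ F, μ (B u) ≤ ENNReal.ofReal (1/2 + ρ) := by
      intro u huF
      have hsub : μ (B u) ≤ μ {x | (∑ j, u j * x j) ≤ 2*ξ} + μ {x | Υ ≤ ‖x‖} :=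
        measure_union_le _ _
      have hfin : ∀ S : Set (EuclideanSpace ℝ (Fin p)), μ S ≠ ⊤ :=
        fun S => (measure_lt_top μ S).ne
      have htR : (μ (B u)).toReal ≤ (μ {x | (∑ j, u j * x j) ≤ 2*ξ}).toReal
          + (μ {x | Υ ≤ ‖x‖}).toReal := by
        have := ENNReal.toReal_mono (ENNReal.add_ne_top.mpr ⟨hfin _, hfin _⟩) hsub
        rwa [ENNReal.toReal_add (hfin _) (hfin _)] at this
      have hhalf := half_bound μ hsym (by linarith : (0:ℝ) ≤ 2*ξ) u
      have h1 := hρ1 u huF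
      have : (μ (B u)).toReal ≤ 1/2 + ρ := by
        rw [hρdef]
        have h2ξ : {x : EuclideanSpace ℝ (Fin p) | |∑ j, u j * x j| ≤ 2*ξ}
            = {x | |∑ j, u j * x j| ≤ 2 * ξ} := rfl
        linarith
      calc μ (B u) = ENNReal.ofReal ((μ (B u)).toReal) := (ENNReal.ofReal_toReal (hfin _)).symm
        _ ≤ ENNReal.ofReal (1/2 + ρ) := ENNReal.ofReal_le_ofReal this
    -- ρ ≥ 0
    have hρnn : 0 ≤ ρ := by
      rw [hρdef]
      have h2 : (0:ℝ) ≤ (μ {x | Υ ≤ ‖x‖}).toReal := ENNReal.toReal_nonneg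
      have hvex : ∃ v : EuclideanSpace ℝ (Fin p), ‖v‖ = 1 := by
        haveI : Nonempty (Fin p) := ⟨⟨0, hp⟩⟩
        haveI : Nontrivial (EuclideanSpace ℝ (Fin p)) := by
          apply nontrivial_of_ne (EuclideanSpace.single ⟨0, hp⟩ (1:ℝ)) 0
          intro hcontra
          have := congrFun (congrArg WithLp.ofLp hcontra) ⟨0, hp⟩
          simp [EuclideanSpace.single_apply] at this
        exact exists_norm_eq _ zero_le_one
      obtain ⟨v, hv⟩ := hvex
      have humem : v ∈ Metric.sphere (0 : EuclideanSpace ℝ (Fin p)) 1 :=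
        mem_sphere_zero_iff_norm.mpr hv
      have hbdd : BddAbove (Set.range (fun w : Metric.sphere (0 : EuclideanSpace ℝ (Fin p)) 1 =>
          (μ {x | |∑ j, (w : EuclideanSpace ℝ (Fin p)) j * x j| ≤ 2 * ξ}).toReal / 2)) := by
        refine ⟨1/2, ?_⟩
        rintro y ⟨w, rfl⟩
        have h1 : μ {x | |∑ j, (w : EuclideanSpace ℝ (Fin p)) j * x j| ≤ 2 * ξ} ≤ 1 := prob_le_one
        have := ENNReal.toReal_mono ENNReal.one_ne_top h1
        rw [ENNReal.toReal_one] at this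
        linarith
      have h3 := le_ciSup hbdd (⟨v, humem⟩ : Metric.sphere (0 : EuclideanSpace ℝ (Fin p)) 1)
      have h4 : (0:ℝ) ≤ (μ {x | |∑ j, v j * x j| ≤ 2 * ξ}).toReal / 2 := by positivity
      linarith [h3.trans' h4]
    -- assemble
    calc P {s | ¬ Metric.closedBall (0 : EuclideanSpace ℝ (Fin p)) ξ ⊆
            convexHull ℝ (Set.range s)}
        ≤ P (⋃ u ∈ F, Set.pi Set.univ (fun _ : Fin m => B u)) := measure_mono hincl
      _ ≤ ∑ u ∈ F, P (Set.pi Set.univ (fun _ : Fin m => B u)) := measure_biUnion_finset_le _ _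
      _ ≤ ∑ u ∈ F, ENNReal.ofReal (1/2 + ρ) ^ m := by
          apply Finset.sum_le_sum
          intro u huF
          rw [hP, Measure.pi_pi]
          rw [Finset.prod_const, Finset.card_univ, Fintype.card_fin]
          exact pow_le_pow_left' (hμB u huF) m
      _ = (F.card : ℝ≥0∞) * ENNReal.ofReal (1/2 + ρ) ^ m := by
          rw [Finset.sum_const, nsmul_eq_mul]
      _ ≤ ENNReal.ofReal ((1 + 2 * Υ / ξ) ^ p) * ENNReal.ofReal ((1/2 + ρ) ^ m) := by
          apply mul_le_mul'
          · rw [← ENNReal.ofReal_natCast]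
            apply ENNReal.ofReal_le_ofReal
            have : (1:ℝ) + 2 / ε = 1 + 2 * Υ / ξ := by
              rw [hε]; field_simp
            rw [← this]
            exact hFcard
          · rw [← ENNReal.ofReal_pow (by linarith)]
      _ = ENNReal.ofReal ((1 + 2 * Υ / ξ) ^ p * (1 / 2 + ρ) ^ m) := by
          rw [← ENNReal.ofReal_mul (by positivity)]

end Main

end
end

section
/- Let X ∈ ℝ^p be a random vector such that for every unit vector v ∈ 𝕊^{p−1} the real random variable v^⊤ X has a Lebesgue density f_v, and suppose for some q > 1 that sup_{v ∈ 𝕊^{p−1}} (∫ f_v^q(t) dt)^{1/q} ≤ C < ∞. Then, for any c₀ > 0, setting ξ = (1/2)·[ q / (π(q−1)(c₀^{−1} e C)^{2q/(q−1)}) ]^{1/2}, one has sup_{v ∈ 𝕊^{p−1}} ℙ(|v^⊤ X| ≤ 2ξ) ≤ c₀. -/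
open MeasureTheory
open scoped ENNReal

noncomputable section

lemma key_real (q C c₀ : ℝ) (hq : 1 < q) (hC : 0 < C) (hc₀ : 0 < c₀) :
    C * (2 * Real.sqrt (q / (Real.pi * (q - 1) *
      (c₀⁻¹ * Real.exp 1 * C) ^ (2 * q / (q - 1))))) ^ ((q - 1) / q) ≤ c₀ := by
  have hq0 : (0:ℝ) < q := lt_trans one_pos hq
  have hq1 : (0:ℝ) < q - 1 := by linarith
  set r : ℝ := q / (q - 1) with hrdef
  have hr : 0 < r := div_pos hq0 hq1
  have hrq : r * (q - 1) = q := div_mul_cancel₀ _ (ne_of_gt hq1)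
  set K : ℝ := c₀⁻¹ * Real.exp 1 * C with hKdef
  have hK : 0 < K := by positivity
  have h2r : 2 * q / (q - 1) = 2 * r := by rw [hrdef]; ring
  set D : ℝ := Real.pi * (q - 1) * K ^ (2 * q / (q - 1)) with hDdef
  have hD : 0 < D := by
    have := Real.pi_pos
    have : (0:ℝ) < K ^ (2 * q / (q - 1)) := Real.rpow_pos_of_pos hK _
    positivity
  have hc0C : (0:ℝ) < c₀ / C := by positivity
  -- main numeric inequality
  have step1 : 4 * (q / D) ≤ (c₀ / C) ^ (2 * r) := by
    rw [show 4 * (q / D) = (4 * q) / D by ring, div_le_iff₀ hD]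
    have hmul : (c₀ / C) ^ (2 * r) * D =
        Real.pi * (q - 1) * ((c₀ / C) * K) ^ (2 * r) := by
      rw [hDdef, h2r, Real.mul_rpow hc0C.le hK.le]; ring
    have hKc : (c₀ / C) * K = Real.exp 1 := by
      rw [hKdef]; field_simp
    have hexp : ((c₀ / C) * K) ^ (2 * r) = Real.exp (2 * r) := by
      rw [hKc, Real.exp_one_rpow]
    have hge : 2 * r + 1 ≤ Real.exp (2 * r) := by
      have := Real.add_one_le_exp (2 * r); linarith
    have hpi := Real.pi_gt_three
    calc 4 * q ≤ Real.pi * (q - 1) * (2 * r + 1) := by nlinarith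
      _ ≤ Real.pi * (q - 1) * Real.exp (2 * r) := by
          exact mul_le_mul_of_nonneg_left hge (by positivity)
      _ = (c₀ / C) ^ (2 * r) * D := by rw [hmul, hexp]
  have step1' : 4 * (q / D) ≤ ((c₀ / C) ^ r) ^ 2 := by
    have hpow2 : (c₀ / C) ^ (2 * r) = ((c₀ / C) ^ r) ^ 2 := by
      rw [show (2:ℝ) * r = r * 2 by ring, Real.rpow_mul hc0C.le, Real.rpow_two]
    rw [← hpow2]; exact step1
  have step2 : 2 * Real.sqrt (q / D) ≤ (c₀ / C) ^ r := by
    have hsq : 2 * Real.sqrt (q / D) = Real.sqrt (4 * (q / D)) := by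
      rw [show (4:ℝ) * (q / D) = 2 ^ 2 * (q / D) by norm_num,
        Real.sqrt_mul (by positivity), Real.sqrt_sq (by norm_num)]
    rw [hsq]
    calc Real.sqrt (4 * (q / D)) ≤ Real.sqrt (((c₀ / C) ^ r) ^ 2) :=
          Real.sqrt_le_sqrt step1'
      _ = (c₀ / C) ^ r := Real.sqrt_sq (Real.rpow_nonneg hc0C.le r)
  have h3 : (2 * Real.sqrt (q / D)) ^ ((q - 1) / q) ≤ ((c₀ / C) ^ r) ^ ((q - 1) / q) :=
    Real.rpow_le_rpow (by positivity) step2 (by positivity)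
  have h4 : ((c₀ / C) ^ r) ^ ((q - 1) / q) = c₀ / C := by
    rw [← Real.rpow_mul hc0C.le,
      show r * ((q - 1) / q) = 1 by rw [hrdef]; field_simp, Real.rpow_one]
  calc C * (2 * Real.sqrt (q / D)) ^ ((q - 1) / q) ≤ C * (c₀ / C) :=
        mul_le_mul_of_nonneg_left (h3.trans_eq h4) hC.le
    _ = c₀ := by field_simp



/- STATEMENT 9 (Lemma `density:lemma`).
If for every unit vector v the random variable v^⊤X has Lebesgue density f_v, and
sup_{v ∈ 𝕊^{p−1}} (∫ f_v^q)^{1/q} ≤ C < ∞ for some q > 1, then for any c₀ > 0, setting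
ξ = (1/2)(q/(π(q−1)(c₀⁻¹eC)^{2q/(q−1)}))^{1/2}, we have
sup_{v ∈ 𝕊^{p−1}} ℙ(|v^⊤X| ≤ 2ξ) ≤ c₀. -/
theorem small_ball_of_bounded_density {p : ℕ}
    (q C c₀ : ℝ) (hq : 1 < q) (hC : 0 < C) (hc₀ : 0 < c₀)
    (μ : Measure (EuclideanSpace ℝ (Fin p))) [IsProbabilityMeasure μ]
    (f : EuclideanSpace ℝ (Fin p) → ℝ → ℝ)
    (hf0 : ∀ v t, 0 ≤ f v t)
    -- f v is the Lebesgue density of v^⊤X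
    (hdens : ∀ v : EuclideanSpace ℝ (Fin p), ‖v‖ = 1 →
      Measure.map (fun x : EuclideanSpace ℝ (Fin p) => ∑ j, v j * x j) μ =
        volume.withDensity fun t => ENNReal.ofReal (f v t))
    -- the L^q norms of the densities are bounded by C
    (hLq : ∀ v : EuclideanSpace ℝ (Fin p), ‖v‖ = 1 →
      (∫⁻ t, ENNReal.ofReal (f v t) ^ q) ^ (1 / q) ≤ ENNReal.ofReal C) :
    ∀ v : EuclideanSpace ℝ (Fin p), ‖v‖ = 1 →
      μ {x | |∑ j, v j * x j| ≤
          2 * (1 / 2 * Real.sqrt (q / (Real.pi * (q - 1) *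
            (c₀⁻¹ * Real.exp 1 * C) ^ (2 * q / (q - 1)))))} ≤ ENNReal.ofReal c₀ := by
  intro v hv
  have hq0 : (0:ℝ) < q := lt_trans one_pos hq
  have hq1 : (0:ℝ) < q - 1 := by linarith
  set a : ℝ := 2 * (1 / 2 * Real.sqrt (q / (Real.pi * (q - 1) *
      (c₀⁻¹ * Real.exp 1 * C) ^ (2 * q / (q - 1))))) with hadef
  have ha0 : 0 ≤ a := by positivity
  have hmeas : Measurable (fun x : EuclideanSpace ℝ (Fin p) => ∑ j, v j * x j) :=
    Finset.measurable_sum _ fun j _ => ((measurable_pi_apply j).comp (WithLp.measurable_ofLp 2 _)).const_mul _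
  have hSicc : {t : ℝ | |t| ≤ a} = Set.Icc (-a) a := by ext t; simp [abs_le]
  have hS : MeasurableSet {t : ℝ | |t| ≤ a} := by rw [hSicc]; exact measurableSet_Icc
  have hmap : μ {x | |∑ j, v j * x j| ≤ a} =
      ∫⁻ t in {t : ℝ | |t| ≤ a}, ENNReal.ofReal (f v t) := by
    rw [← withDensity_apply _ hS, ← hdens v hv, Measure.map_apply hmeas hS]
    rfl
  rw [hmap]
  obtain ⟨g, hgm, hgle, hgeq⟩ := exists_measurable_le_lintegral_eq
    (volume.restrict {t : ℝ | |t| ≤ a}) (fun t => ENNReal.ofReal (f v t))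
  rw [hgeq]
  have hconj : q.HolderConjugate (q / (q - 1)) := .conjExponent hq
  have hold := ENNReal.lintegral_mul_le_Lp_mul_Lq
    (volume.restrict {t : ℝ | |t| ≤ a}) hconj hgm.aemeasurable
    (aemeasurable_const (b := (1 : ℝ≥0∞)))
  simp only [Pi.mul_apply, mul_one, ENNReal.one_rpow, lintegral_one,
    Measure.restrict_apply MeasurableSet.univ, Set.univ_inter] at hold
  have h1 : (∫⁻ t in {t : ℝ | |t| ≤ a}, g t ^ q) ≤ ∫⁻ t, ENNReal.ofReal (f v t) ^ q :=
    le_trans (lintegral_mono fun t => ENNReal.rpow_le_rpow (hgle t) hq0.le)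
      (lintegral_mono' Measure.restrict_le_self le_rfl)
  have h2 : (∫⁻ t, ENNReal.ofReal (f v t) ^ q) ≤ ENNReal.ofReal C ^ q := by
    have h := ENNReal.rpow_le_rpow (hLq v hv) hq0.le
    rwa [← ENNReal.rpow_mul, one_div, inv_mul_cancel₀ (ne_of_gt hq0),
      ENNReal.rpow_one] at h
  have hvol : volume {t : ℝ | |t| ≤ a} = ENNReal.ofReal (2 * a) := by
    rw [hSicc, Real.volume_Icc]; congr 1; ring
  have hCq : (ENNReal.ofReal C ^ q) ^ (1 / q) = ENNReal.ofReal C := by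
    rw [← ENNReal.rpow_mul, mul_one_div_cancel (ne_of_gt hq0), ENNReal.rpow_one]
  have hinv : 1 / (q / (q - 1)) = (q - 1) / q := one_div_div _ _
  have h2a : 2 * a = 2 * Real.sqrt (q / (Real.pi * (q - 1) *
      (c₀⁻¹ * Real.exp 1 * C) ^ (2 * q / (q - 1)))) := by rw [hadef]; ring
  calc (∫⁻ t in {t : ℝ | |t| ≤ a}, g t)
      ≤ (∫⁻ t in {t : ℝ | |t| ≤ a}, g t ^ q) ^ (1 / q) *
        (volume {t : ℝ | |t| ≤ a}) ^ (1 / (q / (q - 1))) := hold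
    _ ≤ (ENNReal.ofReal C ^ q) ^ (1 / q) * ENNReal.ofReal (2 * a) ^ ((q - 1) / q) := by
        rw [hvol, hinv]
        exact mul_le_mul_left (ENNReal.rpow_le_rpow (h1.trans h2) (by positivity)) _
    _ = ENNReal.ofReal (C * (2 * a) ^ ((q - 1) / q)) := by
        rw [hCq, ENNReal.ofReal_rpow_of_nonneg (by positivity) (by positivity),
          ← ENNReal.ofReal_mul hC.le]
    _ ≤ ENNReal.ofReal c₀ := by
        rw [h2a]
        exact ENNReal.ofReal_le_ofReal (key_real q C c₀ hq hC hc₀)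

end
end

section
/- Consider the linear model Y_i = X_i^⊤ β* + ε_i with ε_i i.i.d. U([−a,a]), a > 0 a constant, and any random design X_i independent of the errors. Define the quantity ℛ := a²p / (16 (inf_{R ∈ 𝒪} max_{j ∈ [p]} 𝔼_X Σ_{i ∈ [n]} |(X_i^⊤ R)_j|)²), where 𝒪 is the set of p × p orthogonal matrices. Then: (i) inf_{β̂} sup_{β* ∈ ℝ^p} 𝔼_{β*} ‖β̂ − β*‖₂² ≥ ℛ, where the infimum is over all estimators β̂ of β* from the data; and (ii) inf_{β̂} sup_{β* ∈ ℝ^p} ℙ_{β*}( ‖β̂ − β*‖₂ ≥ √(ℛ/2) ) ≥ 1/2⁸. -/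
open MeasureTheory ProbabilityTheory
open scoped ENNReal

noncomputable section

/-- The uniform probability measure on `[-a, a]`. -/
def unifIcc (a : ℝ) : Measure ℝ :=
  (ENNReal.ofReal (2 * a))⁻¹ • (volume.restrict (Set.Icc (-a) a))

lemma unifIcc_prob {a : ℝ} (ha : 0 < a) : IsProbabilityMeasure (unifIcc a) := by
  constructor
  rw [unifIcc, Measure.smul_apply, Measure.restrict_apply MeasurableSet.univ,
    Set.univ_inter, Real.volume_Icc, smul_eq_mul]
  rw [show a - -a = 2 * a by ring]
  exact ENNReal.inv_mul_cancel (by simp [ha.le]; linarith) ENNReal.ofReal_ne_top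

lemma pi_unif_eq (n : ℕ) {a : ℝ} (ha : 0 < a) :
    (Measure.pi fun _ : Fin n => unifIcc a) =
      ((ENNReal.ofReal (2*a))⁻¹) ^ n •
        ((volume : Measure (Fin n → ℝ)).restrict (Set.univ.pi fun _ => Set.Icc (-a) a)) := by
  haveI := unifIcc_prob ha
  refine Measure.pi_eq fun s hs => ?_
  rw [Measure.smul_apply, Measure.restrict_apply (MeasurableSet.univ_pi hs),
    Set.pi_inter_distrib.symm]
  rw [volume_pi, Measure.pi_pi, smul_eq_mul]
  rw [show ((ENNReal.ofReal (2*a))⁻¹) ^ n = ∏ _i : Fin n, (ENNReal.ofReal (2*a))⁻¹ by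
    simp]
  rw [← Finset.prod_mul_distrib]
  refine Finset.prod_congr rfl fun i _ => ?_
  rw [unifIcc, Measure.smul_apply, Measure.restrict_apply (hs i), smul_eq_mul]

lemma volume_Icc_diff {a t : ℝ} (ha : 0 < a) :
    volume (Set.Icc (-a + t) (a + t) \ Set.Icc (-a) a) ≤ ENNReal.ofReal |t| := by
  rcases le_or_gt 0 t with ht | ht
  · have hsub : Set.Icc (-a + t) (a + t) \ Set.Icc (-a) a ⊆ Set.Ioc a (a + t) := by
      intro x hx
      rcases hx with ⟨⟨h1, h2⟩, h3⟩
      rw [Set.mem_Icc, not_and_or, not_le, not_le] at h3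
      have hxa : a < x := by
        rcases h3 with h | h
        · linarith
        · exact h
      exact Set.mem_Ioc.2 ⟨hxa, h2⟩
    refine (measure_mono hsub).trans ?_
    rw [Real.volume_Ioc, abs_of_nonneg ht]
    exact ENNReal.ofReal_le_ofReal (by linarith)
  · have hsub : Set.Icc (-a + t) (a + t) \ Set.Icc (-a) a ⊆ Set.Ico (-a + t) (-a) := by
      intro x hx
      rcases hx with ⟨⟨h1, h2⟩, h3⟩
      rw [Set.mem_Icc, not_and_or, not_le, not_le] at h3
      have hxa : x < -a := by
        rcases h3 with h | h
        · exact h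
        · linarith
      exact Set.mem_Ico.2 ⟨h1, hxa⟩
    refine (measure_mono hsub).trans ?_
    rw [Real.volume_Ico, abs_of_neg ht]
    exact ENNReal.ofReal_le_ofReal (by linarith)

lemma shift_bound {n : ℕ} (hn : 0 < n) {a : ℝ} (ha : 0 < a) (t : Fin n → ℝ)
    {B : Set (Fin n → ℝ)} (hB : MeasurableSet B) :
    (Measure.pi fun _ : Fin n => unifIcc a) ((fun e => e + t) ⁻¹' B)
      ≤ (Measure.pi fun _ : Fin n => unifIcc a) B
          + ENNReal.ofReal ((∑ i, |t i|) / (2*a)) := by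
  classical
  set c : ℝ≥0∞ := (ENNReal.ofReal (2*a))⁻¹ with hc
  have h2a : (0:ℝ) < 2*a := by linarith
  have h2a0 : ENNReal.ofReal (2*a) ≠ 0 := by
    simp only [ne_eq, ENNReal.ofReal_eq_zero, not_le]; exact h2a
  have hcmul : c * ENNReal.ofReal (2*a) = 1 :=
    ENNReal.inv_mul_cancel h2a0 ENNReal.ofReal_ne_top
  set box : Set (Fin n → ℝ) := Set.univ.pi fun _ => Set.Icc (-a) a with hbox
  set box' : Set (Fin n → ℝ) := Set.univ.pi fun i => Set.Icc (-a + t i) (a + t i) with hbox'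
  have hmes : Measurable (fun e : Fin n → ℝ => e + t) := measurable_add_const t
  have hboxm : MeasurableSet box := MeasurableSet.univ_pi fun _ => measurableSet_Icc
  -- rewrite using pi_unif_eq
  rw [pi_unif_eq n ha, Measure.smul_apply, Measure.smul_apply,
    Measure.restrict_apply (hmes hB), Measure.restrict_apply hB, smul_eq_mul, smul_eq_mul]
  -- set identity
  have hset : (fun e => e + t) ⁻¹' B ∩ box = (fun e => e + t) ⁻¹' (B ∩ box') := by
    ext e
    simp only [Set.mem_inter_iff, Set.mem_preimage, hbox, hbox', Set.mem_pi,
      Set.mem_univ, true_implies, Set.mem_Icc, Pi.add_apply]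
    constructor
    · rintro ⟨h1, h2⟩
      exact ⟨h1, fun i => ⟨by linarith [(h2 i).1], by linarith [(h2 i).2]⟩⟩
    · rintro ⟨h1, h2⟩
      exact ⟨h1, fun i => ⟨by linarith [(h2 i).1], by linarith [(h2 i).2]⟩⟩
  rw [hset]
  have htrans : volume ((fun e => e + t) ⁻¹' (B ∩ box')) = volume (B ∩ box') := by
    have : (fun e : Fin n → ℝ => e + t) = (fun e => t + e) := by
      funext e; exact add_comm e t
    rw [this]
    exact measure_preimage_add _ t _
  rw [htrans]
  -- B ∩ box' ⊆ (B ∩ box) ∪ (box' \ box)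
  have hsub : B ∩ box' ⊆ (B ∩ box) ∪ (box' \ box) := by
    intro x hx
    by_cases hxb : x ∈ box
    · exact Or.inl ⟨hx.1, hxb⟩
    · exact Or.inr ⟨hx.2, hxb⟩
  have h1 : volume (B ∩ box') ≤ volume (B ∩ box) + volume (box' \ box) :=
    le_trans (measure_mono hsub) (measure_union_le _ _)
  -- box' \ box ⊆ ⋃ i, pi (C i)
  set C : Fin n → Fin n → Set ℝ := fun i k =>
    if k = i then Set.Icc (-a + t i) (a + t i) \ Set.Icc (-a) a
    else Set.Icc (-a + t k) (a + t k) with hC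
  have hsub2 : box' \ box ⊆ ⋃ i, Set.univ.pi (C i) := by
    rintro x ⟨hx1, hx2⟩
    rw [hbox, Set.mem_pi] at hx2
    push_neg at hx2
    obtain ⟨i, -, hi⟩ := hx2
    refine Set.mem_iUnion.2 ⟨i, ?_⟩
    rw [Set.mem_pi]
    intro k _
    rw [hC]
    by_cases hk : k = i
    · subst hk
      simp only [if_pos rfl]
      exact ⟨hx1 k (Set.mem_univ k), hi⟩
    · simp only [if_neg hk]
      exact hx1 k (Set.mem_univ k)
  have hCi : ∀ i, volume (Set.univ.pi (C i)) ≤ ENNReal.ofReal |t i| * (ENNReal.ofReal (2*a)) ^ (n-1) := by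
    intro i
    rw [volume_pi, Measure.pi_pi]
    rw [Fintype.prod_eq_mul_prod_compl i]
    have e1 : volume (C i i) ≤ ENNReal.ofReal |t i| := by
      rw [hC]; simp only [if_pos rfl]; exact volume_Icc_diff ha
    have e2 : ∀ k ∈ ({i}ᶜ : Finset (Fin n)), volume (C i k) = ENNReal.ofReal (2*a) := by
      intro k hk
      have hk' : k ≠ i := by simpa using hk
      rw [hC]; simp only [if_neg hk']
      rw [Real.volume_Icc]
      ring_nf
    rw [Finset.prod_congr rfl e2, Finset.prod_const]
    have hcard : ({i}ᶜ : Finset (Fin n)).card = n - 1 := by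
      rw [Finset.card_compl, Finset.card_singleton, Fintype.card_fin]
    rw [hcard]
    exact mul_le_mul_left e1 _
  have h2 : volume (box' \ box) ≤ (∑ i, ENNReal.ofReal |t i|) * (ENNReal.ofReal (2*a)) ^ (n-1) := by
    refine le_trans (measure_mono hsub2) ?_
    refine le_trans (measure_iUnion_le _) ?_
    rw [Finset.sum_mul]
    rw [tsum_fintype]
    exact Finset.sum_le_sum fun i _ => hCi i
  -- put things together
  calc c ^ n * volume (B ∩ box')
      ≤ c ^ n * (volume (B ∩ box) + (∑ i, ENNReal.ofReal |t i|) * (ENNReal.ofReal (2*a)) ^ (n-1)) := by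
        exact mul_le_mul_right (le_trans h1 (add_le_add_right h2 _)) _
    _ = c ^ n * volume (B ∩ box)
          + (∑ i, ENNReal.ofReal |t i|) * (c ^ n * (ENNReal.ofReal (2*a)) ^ (n-1)) := by
        ring
    _ = c ^ n * volume (B ∩ box) + ENNReal.ofReal ((∑ i, |t i|) / (2*a)) := by
        congr 1
        obtain ⟨m, rfl⟩ : ∃ m, n = m + 1 := ⟨n - 1, (Nat.succ_pred_eq_of_pos hn).symm⟩
        have hm : m + 1 - 1 = m := rfl
        have : c ^ (m+1) * (ENNReal.ofReal (2*a)) ^ (m+1-1) = c := by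
          rw [hm, pow_succ]
          rw [show c ^ m * c * ENNReal.ofReal (2*a) ^ m
              = (c * ENNReal.ofReal (2*a)) ^ m * c by ring]
          rw [hcmul, one_pow, one_mul]
        rw [this]
        rw [ENNReal.ofReal_div_of_pos h2a, div_eq_mul_inv, ← hc]
        rw [ENNReal.ofReal_sum_of_nonneg (fun i _ => abs_nonneg (t i))]

/-- The joint law of the data `(X_i, Y_i)_{i ∈ [n]}` in the linear model
`Y_i = X_i^⊤β* + ε_i` with design law `μX` (joint law of `(X_1,…,X_n)`) and noise
`ε_i` i.i.d. `U([-a,a])` independent of the design. -/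
def dataLaw (n p : ℕ) (a : ℝ) (μX : Measure (Fin n → EuclideanSpace ℝ (Fin p)))
    (βstar : EuclideanSpace ℝ (Fin p)) :
    Measure (Fin n → EuclideanSpace ℝ (Fin p) × ℝ) :=
  Measure.map
    (fun z : (Fin n → EuclideanSpace ℝ (Fin p)) × (Fin n → ℝ) =>
      fun i => (z.1 i, (∑ j, z.1 i j * βstar j) + z.2 i))
    (μX.prod (Measure.pi fun _ : Fin n => unifIcc a))

lemma measurable_dataMap {n p : ℕ} (β : EuclideanSpace ℝ (Fin p)) :
    Measurable (fun z : (Fin n → EuclideanSpace ℝ (Fin p)) × (Fin n → ℝ) =>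
      fun i => (z.1 i, (∑ j, z.1 i j * β j) + z.2 i)) := by
  refine measurable_pi_lambda _ fun i => Measurable.prod ?_ ?_
  · exact (measurable_pi_apply i).comp measurable_fst
  · refine Measurable.add ?_ ((measurable_pi_apply i).comp measurable_snd)
    refine Finset.measurable_sum _ fun j _ => ?_
    exact ((measurable_pi_apply j).comp ((WithLp.measurable_ofLp 2 (Fin p → ℝ)).comp ((measurable_pi_apply i).comp measurable_fst))).mul_const _

lemma dataLaw_prob {n p : ℕ} {a : ℝ} (ha : 0 < a)
    (μX : Measure (Fin n → EuclideanSpace ℝ (Fin p))) [IsProbabilityMeasure μX]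
    (β : EuclideanSpace ℝ (Fin p)) : IsProbabilityMeasure (dataLaw n p a μX β) := by
  haveI := unifIcc_prob ha
  exact Measure.isProbabilityMeasure_map (measurable_dataMap β).aemeasurable

lemma dataLaw_compare {n p : ℕ} (hn : 0 < n) {a : ℝ} (ha : 0 < a)
    (μX : Measure (Fin n → EuclideanSpace ℝ (Fin p))) [IsProbabilityMeasure μX]
    (β β' : EuclideanSpace ℝ (Fin p))
    {E : Set (Fin n → EuclideanSpace ℝ (Fin p) × ℝ)} (hE : MeasurableSet E)
    (hInt : Integrable (fun x => ∑ i, |∑ k, x i k * (β' k - β k)|) μX) :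
    dataLaw n p a μX β' E ≤ dataLaw n p a μX β E +
      ENNReal.ofReal ((∫ x, ∑ i, |∑ k, x i k * (β' k - β k)| ∂μX) / (2*a)) := by
  haveI := unifIcc_prob ha
  set πU := (Measure.pi fun _ : Fin n => unifIcc a) with hπU
  rw [dataLaw, dataLaw, Measure.map_apply (measurable_dataMap β') hE,
    Measure.map_apply (measurable_dataMap β) hE,
    Measure.prod_apply ((measurable_dataMap β') hE),
    Measure.prod_apply ((measurable_dataMap β) hE)]
  set t : (Fin n → EuclideanSpace ℝ (Fin p)) → Fin n → ℝ :=
    fun x i => ∑ k, x i k * (β' k - β k) with ht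
  have hpt : ∀ x, (Prod.mk x ⁻¹'
      ((fun z : (Fin n → EuclideanSpace ℝ (Fin p)) × (Fin n → ℝ) =>
        fun i => (z.1 i, (∑ j, z.1 i j * β' j) + z.2 i)) ⁻¹' E))
      = (fun e => e + t x) ⁻¹'
        (Prod.mk x ⁻¹'
          ((fun z : (Fin n → EuclideanSpace ℝ (Fin p)) × (Fin n → ℝ) =>
            fun i => (z.1 i, (∑ j, z.1 i j * β j) + z.2 i)) ⁻¹' E)) := by
    intro x
    ext e
    simp only [Set.mem_preimage]
    have : (fun i => (x i, (∑ j, x i j * β' j) + e i))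
        = (fun i => (x i, (∑ j, x i j * β j) + (e + t x) i)) := by
      funext i
      simp only [Pi.add_apply, ht]
      congr 1
      rw [show (∑ k, x i k * (β' k - β k)) = (∑ k, x i k * β' k) - ∑ k, x i k * β k by
        rw [← Finset.sum_sub_distrib]; exact Finset.sum_congr rfl fun k _ => by ring]
      ring
    rw [this]
  have hsec : ∀ x, MeasurableSet (Prod.mk x ⁻¹'
      ((fun z : (Fin n → EuclideanSpace ℝ (Fin p)) × (Fin n → ℝ) =>
        fun i => (z.1 i, (∑ j, z.1 i j * β j) + z.2 i)) ⁻¹' E)) := fun x =>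
    measurable_prodMk_left ((measurable_dataMap β) hE)
  calc ∫⁻ x, πU (Prod.mk x ⁻¹'
          ((fun z : (Fin n → EuclideanSpace ℝ (Fin p)) × (Fin n → ℝ) =>
            fun i => (z.1 i, (∑ j, z.1 i j * β' j) + z.2 i)) ⁻¹' E)) ∂μX
      ≤ ∫⁻ x, (πU (Prod.mk x ⁻¹'
          ((fun z : (Fin n → EuclideanSpace ℝ (Fin p)) × (Fin n → ℝ) =>
            fun i => (z.1 i, (∑ j, z.1 i j * β j) + z.2 i)) ⁻¹' E))
          + ENNReal.ofReal ((∑ i, |t x i|) / (2*a))) ∂μX := by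
        refine lintegral_mono fun x => ?_
        rw [hpt x]
        exact shift_bound hn ha (t x) (hsec x)
    _ = (∫⁻ x, πU (Prod.mk x ⁻¹'
          ((fun z : (Fin n → EuclideanSpace ℝ (Fin p)) × (Fin n → ℝ) =>
            fun i => (z.1 i, (∑ j, z.1 i j * β j) + z.2 i)) ⁻¹' E)) ∂μX)
          + ∫⁻ x, ENNReal.ofReal ((∑ i, |t x i|) / (2*a)) ∂μX := by
        rw [lintegral_add_left]
        exact measurable_measure_prodMk_left ((measurable_dataMap β) hE)
    _ ≤ (∫⁻ x, πU (Prod.mk x ⁻¹'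
          ((fun z : (Fin n → EuclideanSpace ℝ (Fin p)) × (Fin n → ℝ) =>
            fun i => (z.1 i, (∑ j, z.1 i j * β j) + z.2 i)) ⁻¹' E)) ∂μX)
          + ENNReal.ofReal ((∫ x, ∑ i, |∑ k, x i k * (β' k - β k)| ∂μX) / (2*a)) := by
        refine add_le_add_right (le_of_eq ?_) _
        have hInt' : Integrable (fun x => (∑ i, |∑ k, x i k * (β' k - β k)|) / (2*a)) μX :=
          hInt.div_const _
        have hnn : 0 ≤ᶠ[ae μX] fun x => (∑ i, |∑ k, x i k * (β' k - β k)|) / (2*a) := by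
          filter_upwards with x
          positivity
        rw [← integral_div, ofReal_integral_eq_lintegral_ofReal hInt' hnn]

lemma orthog_entries1 {p : ℕ} {Q : Matrix (Fin p) (Fin p) ℝ}
    (hQ : Q ∈ Matrix.orthogonalGroup (Fin p) ℝ) (j j' : Fin p) :
    ∑ k, Q k j * Q k j' = if j = j' then 1 else 0 := by
  have h := (Matrix.mem_orthogonalGroup_iff' (Fin p) ℝ).1 hQ
  have h2 := congrFun (congrFun h j) j'
  rw [Matrix.mul_apply, Matrix.one_apply] at h2
  simpa [Matrix.star_apply] using h2

lemma orthog_entries2 {p : ℕ} {Q : Matrix (Fin p) (Fin p) ℝ}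
    (hQ : Q ∈ Matrix.orthogonalGroup (Fin p) ℝ) (k l : Fin p) :
    ∑ j, Q k j * Q l j = if k = l then 1 else 0 := by
  have h := (Matrix.mem_orthogonalGroup_iff (Fin p) ℝ).1 hQ
  have h2 := congrFun (congrFun h k) l
  rw [Matrix.mul_apply, Matrix.one_apply] at h2
  simpa [Matrix.star_apply] using h2

lemma orthog_norm_sum {p : ℕ} {Q : Matrix (Fin p) (Fin p) ℝ}
    (hQ : Q ∈ Matrix.orthogonalGroup (Fin p) ℝ) (u : Fin p → ℝ) :
    ∑ j, (∑ k, Q k j * u k)^2 = ∑ k, (u k)^2 := by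
  have key : ∀ j : Fin p, (∑ k, Q k j * u k)^2
      = ∑ k, ∑ l, (u k * u l) * (Q k j * Q l j) := by
    intro j
    rw [sq, Finset.sum_mul_sum]
    exact Finset.sum_congr rfl fun k _ => Finset.sum_congr rfl fun l _ => by ring
  rw [Finset.sum_congr rfl fun j _ => key j, Finset.sum_comm]
  refine Finset.sum_congr rfl fun k _ => ?_
  rw [Finset.sum_comm]
  have inner : ∀ l : Fin p, (∑ j, (u k * u l) * (Q k j * Q l j))
      = if k = l then u k * u l else 0 := by
    intro l
    rw [← Finset.mul_sum, orthog_entries2 hQ k l]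
    split <;> simp
  rw [Finset.sum_congr rfl fun l _ => inner l, Finset.sum_ite_eq]
  simp [sq]

lemma householder {p : ℕ} (hp : 0 < p) (w : Fin p → ℝ) (hw : ∑ k, (w k)^2 = 1) :
    ∃ Q ∈ Matrix.orthogonalGroup (Fin p) ℝ, ∀ j, (∑ k, Q k j * w k) ≠ 0 := by
  classical
  set u : Fin p → ℝ := fun _ => (Real.sqrt p)⁻¹ with hu
  have hpR : (0:ℝ) < p := by exact_mod_cast hp
  have hsq : Real.sqrt p ≠ 0 := by positivity
  have hu0 : ∀ j : Fin p, u j ≠ 0 := fun j => inv_ne_zero hsq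
  have hunorm : ∑ k : Fin p, (u k)^2 = 1 := by
    rw [hu]
    simp only [Finset.sum_const, Finset.card_univ, Fintype.card_fin, nsmul_eq_mul]
    rw [← Real.sqrt_inv, Real.sq_sqrt (by positivity)]
    field_simp
  set z : Fin p → ℝ := fun k => w k - u k with hz
  set c : ℝ := ∑ k, (z k)^2 with hc
  set t : ℝ := ∑ k, z k * w k with htdef
  have hct : c = 2 * t := by
    rw [hc, htdef]
    have h1 : ∀ k : Fin p, (z k)^2 = 2 * (z k * w k) - ((w k)^2 - (u k)^2) := by
      intro k
      have : z k = w k - u k := rfl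
      rw [this]; ring
    rw [Finset.sum_congr rfl fun k _ => h1 k, Finset.sum_sub_distrib,
      Finset.sum_sub_distrib, hw, hunorm, ← Finset.mul_sum]
    ring
  by_cases hc0 : c = 0
  · -- w = u, identity works
    have hwk : ∀ k, z k = 0 := by
      intro k
      have hnn : ∀ k ∈ Finset.univ, (0:ℝ) ≤ (z k)^2 := fun k _ => sq_nonneg _
      have hk := (Finset.sum_eq_zero_iff_of_nonneg hnn).1 (by rw [← hc]; exact hc0) k
        (Finset.mem_univ k)
      exact pow_eq_zero_iff (by norm_num) |>.1 hk
    refine ⟨1, one_mem _, fun j => ?_⟩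
    have he : (∑ k, (1 : Matrix (Fin p) (Fin p) ℝ) k j * w k) = w j := by
      rw [Finset.sum_congr rfl (fun k _ => by rw [Matrix.one_apply])]
      rw [Finset.sum_congr rfl (fun k _ => by rw [ite_mul, one_mul, zero_mul])]
      rw [Finset.sum_ite_eq' Finset.univ j w]
      simp
    rw [he]
    have : w j = u j := by have := hwk j; rw [hz] at this; simp at this; linarith [this]
    rw [this]; exact hu0 j
  · have hcpos : 0 < c := lt_of_le_of_ne (by positivity) (Ne.symm hc0)
    set Q : Matrix (Fin p) (Fin p) ℝ :=
      Matrix.of (fun k l => (if k = l then (1:ℝ) else 0) - 2 * z k * z l / c) with hQdef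
    have hQapp : ∀ k l, Q k l = (if k = l then (1:ℝ) else 0) - 2 * z k * z l / c :=
      fun k l => rfl
    have hQmem : Q ∈ Matrix.orthogonalGroup (Fin p) ℝ := by
      rw [Matrix.mem_orthogonalGroup_iff]
      ext k l
      rw [Matrix.mul_apply, Matrix.one_apply]
      have expand : ∀ m : Fin p, Q k m * Q.transpose m l
          = (if k = m then (if l = m then (1:ℝ) else 0) else 0)
            - (if k = m then 2 * z l * z m / c else 0)
            - (if l = m then 2 * z k * z m / c else 0)
            + (4 * z k * z l / c^2) * (z m)^2 := by
        intro m
        rw [Matrix.transpose_apply, hQapp, hQapp]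
        by_cases h1 : k = m <;> by_cases h2 : l = m <;> simp only [h1, h2, if_pos, if_neg,
          if_true, if_false] <;> field_simp <;> ring
      rw [Finset.sum_congr rfl fun m _ => expand m]
      rw [Finset.sum_add_distrib, Finset.sum_sub_distrib, Finset.sum_sub_distrib]
      rw [Finset.sum_ite_eq, Finset.sum_ite_eq, Finset.sum_ite_eq, ← Finset.mul_sum, ← hc]
      simp only [Finset.mem_univ, if_true]
      by_cases hkl : k = l
      · subst hkl
        simp only [if_pos rfl]
        field_simp
        ring
      · have hlk : ¬ (l = k) := fun h => hkl h.symm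
        simp only [if_neg hkl, if_neg hlk]
        field_simp
        ring
    refine ⟨Q, hQmem, fun j => ?_⟩
    have hcol : (∑ k, Q k j * w k) = u j := by
      have expand : ∀ k : Fin p, Q k j * w k
          = (if k = j then w k else 0) - (2 * z j / c) * (z k * w k) := by
        intro k
        rw [hQapp]
        rcases eq_or_ne k j with h1 | h1
        · subst h1; rw [if_pos rfl, if_pos rfl]; ring
        · rw [if_neg h1, if_neg h1]; ring
      rw [Finset.sum_congr rfl fun k _ => expand k, Finset.sum_sub_distrib,
        Finset.sum_ite_eq' Finset.univ j w, ← Finset.mul_sum, ← htdef]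
      simp only [Finset.mem_univ, if_true]
      have ht0 : t ≠ 0 := by
        intro h
        rw [h, mul_zero] at hct
        exact hc0 hct
      have : (2 * z j / c) * t = z j := by
        rw [hct]; field_simp
      rw [this]
      have : w j - z j = u j := by rw [hz]; simp
      exact this
    rw [hcol]
    exact hu0 j

lemma measurable_design_sum {n p : ℕ} (u : Fin p → ℝ) :
    Measurable (fun x : Fin n → EuclideanSpace ℝ (Fin p) => ∑ i, |∑ k, x i k * u k|) := by
  refine Finset.measurable_sum _ fun i _ => ?_
  refine Measurable.abs ?_
  refine Finset.measurable_sum _ fun k _ => ?_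
  exact ((measurable_pi_apply k).comp ((WithLp.measurable_ofLp 2 (Fin p → ℝ)).comp (measurable_pi_apply i))).mul_const _

lemma integrable_of_iInf_pos {n p : ℕ} (hp : 0 < p)
    (μX : Measure (Fin n → EuclideanSpace ℝ (Fin p))) [IsProbabilityMeasure μX]
    (hI : 0 < ⨅ Rot : Matrix.orthogonalGroup (Fin p) ℝ, ⨆ j : Fin p,
        ∫ x, ∑ i, |∑ k, x i k * (Rot : Matrix (Fin p) (Fin p) ℝ) k j| ∂μX) :
    ∀ u : EuclideanSpace ℝ (Fin p), Integrable (fun x => ∑ i, |∑ k, x i k * u k|) μX := by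
  classical
  haveI : Nonempty (Fin p) := ⟨⟨0, hp⟩⟩
  by_contra hcon
  push_neg at hcon
  obtain ⟨u0, hu0⟩ := hcon
  set V : Submodule ℝ (EuclideanSpace ℝ (Fin p)) :=
    { carrier := {u | Integrable (fun x => ∑ i, |∑ k, x i k * u k|) μX}
      zero_mem' := by
        have he : (fun x : Fin n → EuclideanSpace ℝ (Fin p) =>
            ∑ i, |∑ k, x i k * (0 : EuclideanSpace ℝ (Fin p)) k|) = fun _ => 0 := by
          funext x
          simp
        simp only [Set.mem_setOf_eq, he]
        exact integrable_const 0
      add_mem' := by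
        intro u v hu hv
        simp only [Set.mem_setOf_eq] at hu hv ⊢
        refine Integrable.mono (hu.add hv) (measurable_design_sum _).aestronglyMeasurable ?_
        filter_upwards with x
        have h1 : ∀ i : Fin n, |∑ k, x i k * (u + v) k|
            ≤ |∑ k, x i k * u k| + |∑ k, x i k * v k| := by
          intro i
          have he : (∑ k, x i k * (u + v) k) = (∑ k, x i k * u k) + ∑ k, x i k * v k := by
            rw [← Finset.sum_add_distrib]
            refine Finset.sum_congr rfl fun k _ => ?_
            have : (u + v) k = u k + v k := rfl
            rw [this]; ring
          rw [he]
          exact abs_add_le _ _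
        have h2 : (∑ i, |∑ k, x i k * (u + v) k|)
            ≤ (∑ i, |∑ k, x i k * u k|) + ∑ i, |∑ k, x i k * v k| := by
          rw [← Finset.sum_add_distrib]
          exact Finset.sum_le_sum fun i _ => h1 i
        rw [Real.norm_eq_abs, Real.norm_eq_abs,
          abs_of_nonneg (Finset.sum_nonneg fun i _ => abs_nonneg _)]
        exact le_trans h2 (le_abs_self _)
      smul_mem' := by
        intro c u hu
        simp only [Set.mem_setOf_eq] at hu ⊢
        have he : (fun x : Fin n → EuclideanSpace ℝ (Fin p) =>
            ∑ i, |∑ k, x i k * (c • u) k|) = fun x => |c| * ∑ i, |∑ k, x i k * u k| := by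
          funext x
          rw [Finset.mul_sum]
          refine Finset.sum_congr rfl fun i _ => ?_
          have he2 : (∑ k, x i k * (c • u) k) = c * ∑ k, x i k * u k := by
            rw [Finset.mul_sum]
            refine Finset.sum_congr rfl fun k _ => ?_
            have : (c • u) k = c * u k := rfl
            rw [this]; ring
          rw [he2, abs_mul]
        rw [he]
        exact hu.const_mul _ } with hV
  have hu0V : u0 ∉ V := hu0
  have hVne : V ≠ ⊤ := fun h => hu0V (h ▸ Submodule.mem_top)
  have hVorth : Vᗮ ≠ ⊥ := by
    rw [Ne, Submodule.orthogonal_eq_bot_iff]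
    exact hVne
  obtain ⟨w0, hw0V, hw0⟩ := Submodule.ne_bot_iff _ |>.1 hVorth
  set w : EuclideanSpace ℝ (Fin p) := ‖w0‖⁻¹ • w0 with hwdef
  have hwV : w ∈ Vᗮ := Submodule.smul_mem _ _ hw0V
  have hwnorm : ‖w‖ = 1 := norm_smul_inv_norm hw0
  have hwsum : ∑ k, (w k)^2 = 1 := by
    have h1 := EuclideanSpace.norm_eq w
    rw [hwnorm] at h1
    have h2 : ∑ k, ‖w k‖^2 = 1 := by
      have := Real.sqrt_eq_one.1 h1.symm
      exact this
    rw [← h2]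
    exact Finset.sum_congr rfl fun k _ => by rw [Real.norm_eq_abs, sq_abs]
  obtain ⟨Q, hQmem, hQcol⟩ := householder hp w hwsum
  -- every column of Q is non-integrable
  have hcolnot : ∀ j : Fin p, ¬ Integrable (fun x => ∑ i, |∑ k, x i k * Q k j|) μX := by
    intro j hint
    set col : EuclideanSpace ℝ (Fin p) := WithLp.toLp 2 (fun k => Q k j : Fin p → ℝ) with hcol
    have hcolV : col ∈ V := hint
    have hinner : (inner ℝ col w : ℝ) = 0 :=
      (Submodule.mem_orthogonal V w).1 hwV col hcolV
    rw [PiLp.inner_apply] at hinner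
    simp only [RCLike.inner_apply, conj_trivial] at hinner
    exact hQcol j (by rw [← hinner]; exact Finset.sum_congr rfl fun k _ => mul_comm _ _)
  have hzero : (⨆ j : Fin p, ∫ x, ∑ i, |∑ k, x i k * Q k j| ∂μX) = 0 := by
    have he : (fun j : Fin p => ∫ x, ∑ i, |∑ k, x i k * Q k j| ∂μX) = fun _ => (0:ℝ) := by
      funext j
      exact integral_undef (hcolnot j)
    rw [he]
    exact ciSup_const
  have hle : (⨅ Rot : Matrix.orthogonalGroup (Fin p) ℝ, ⨆ j : Fin p,
      ∫ x, ∑ i, |∑ k, x i k * (Rot : Matrix (Fin p) (Fin p) ℝ) k j| ∂μX) ≤ 0 := by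
    have := ciInf_le (f := fun Rot : Matrix.orthogonalGroup (Fin p) ℝ => ⨆ j : Fin p,
      ∫ x, ∑ i, |∑ k, x i k * (Rot : Matrix (Fin p) (Fin p) ℝ) k j| ∂μX)
      ?_ (⟨Q, hQmem⟩ : Matrix.orthogonalGroup (Fin p) ℝ)
    · rw [hzero] at this
      exact this
    · refine ⟨0, ?_⟩
      rintro r ⟨Rot, rfl⟩
      refine le_ciSup_of_le (Set.Finite.bddAbove (Set.finite_range _)) (⟨0, hp⟩ : Fin p) ?_
      refine integral_nonneg fun x => ?_
      exact Finset.sum_nonneg fun i _ => abs_nonneg _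
  linarith

/-- sign vector of a boolean hypercube point -/
def sgn {p : ℕ} (v : Fin p → Bool) (j : Fin p) : ℝ := if v j then 1 else -1

/-- hypercube point in parameter space -/
def bcube {p : ℕ} (Q : Matrix (Fin p) (Fin p) ℝ) (δ : ℝ) (v : Fin p → Bool) :
    EuclideanSpace ℝ (Fin p) := WithLp.toLp 2 (fun k => δ * ∑ j, Q k j * sgn v j)

/-- rotated coordinates of the estimator -/
def wco {n p : ℕ} (βhat : (Fin n → EuclideanSpace ℝ (Fin p) × ℝ) → EuclideanSpace ℝ (Fin p))
    (Q : Matrix (Fin p) (Fin p) ℝ) (d : Fin n → EuclideanSpace ℝ (Fin p) × ℝ) (j : Fin p) : ℝ :=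
  ∑ k, Q k j * βhat d k

/-- the event that the induced test at coordinate `j` errs against `v` -/
def Aset {n p : ℕ} (βhat : (Fin n → EuclideanSpace ℝ (Fin p) × ℝ) → EuclideanSpace ℝ (Fin p))
    (Q : Matrix (Fin p) (Fin p) ℝ) (j : Fin p) (v : Fin p → Bool) :
    Set (Fin n → EuclideanSpace ℝ (Fin p) × ℝ) :=
  {d | if v j then wco βhat Q d j < 0 else 0 ≤ wco βhat Q d j}

lemma wco_measurable {n p : ℕ}
    {βhat : (Fin n → EuclideanSpace ℝ (Fin p) × ℝ) → EuclideanSpace ℝ (Fin p)}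
    (hβ : Measurable βhat) (Q : Matrix (Fin p) (Fin p) ℝ) (j : Fin p) :
    Measurable (fun d => wco βhat Q d j) := by
  refine Finset.measurable_sum _ fun k _ => ?_
  exact ((measurable_pi_apply k).comp ((WithLp.measurable_ofLp 2 (Fin p → ℝ)).comp hβ)).const_mul _

lemma Aset_measurable {n p : ℕ}
    {βhat : (Fin n → EuclideanSpace ℝ (Fin p) × ℝ) → EuclideanSpace ℝ (Fin p)}
    (hβ : Measurable βhat) (Q : Matrix (Fin p) (Fin p) ℝ) (j : Fin p) (v : Fin p → Bool) :
    MeasurableSet (Aset βhat Q j v) := by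
  by_cases hv : v j
  · have : Aset βhat Q j v = {d | wco βhat Q d j < 0} := by
      ext d; simp [Aset, hv]
    rw [this]
    exact measurableSet_lt (wco_measurable hβ Q j) measurable_const
  · have : Aset βhat Q j v = {d | 0 ≤ wco βhat Q d j} := by
      ext d; simp [Aset, hv]
    rw [this]
    exact measurableSet_le measurable_const (wco_measurable hβ Q j)

lemma Aset_update_compl {n p : ℕ}
    (βhat : (Fin n → EuclideanSpace ℝ (Fin p) × ℝ) → EuclideanSpace ℝ (Fin p))
    (Q : Matrix (Fin p) (Fin p) ℝ) (j : Fin p) (v : Fin p → Bool) :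
    Aset βhat Q j (Function.update v j (!v j)) = (Aset βhat Q j v)ᶜ := by
  ext d
  simp only [Aset, Set.mem_setOf_eq, Set.mem_compl_iff, Function.update_self]
  by_cases hv : v j <;> simp [hv, not_lt, not_le]

lemma bcube_col {p : ℕ} {Q : Matrix (Fin p) (Fin p) ℝ}
    (hQ : Q ∈ Matrix.orthogonalGroup (Fin p) ℝ) (δ : ℝ) (v : Fin p → Bool) (j : Fin p) :
    ∑ k, Q k j * (bcube Q δ v) k = δ * sgn v j := by
  classical
  have h1 : ∀ k, Q k j * (bcube Q δ v) k = ∑ j', δ * sgn v j' * (Q k j * Q k j') := by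
    intro k
    have : (bcube Q δ v) k = δ * ∑ j', Q k j' * sgn v j' := rfl
    rw [this, Finset.mul_sum, Finset.mul_sum]
    exact Finset.sum_congr rfl fun j' _ => by ring
  rw [Finset.sum_congr rfl fun k _ => h1 k, Finset.sum_comm]
  have h2 : ∀ j' : Fin p, (∑ k, δ * sgn v j' * (Q k j * Q k j'))
      = if j = j' then δ * sgn v j' else 0 := by
    intro j'
    rw [← Finset.mul_sum, orthog_entries1 hQ j j']
    split <;> simp
  rw [Finset.sum_congr rfl fun j' _ => h2 j', Finset.sum_ite_eq]
  simp

lemma pointwise_risk {n p : ℕ} {Q : Matrix (Fin p) (Fin p) ℝ}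
    (hQ : Q ∈ Matrix.orthogonalGroup (Fin p) ℝ) {δ : ℝ} (hδ : 0 ≤ δ)
    (βhat : (Fin n → EuclideanSpace ℝ (Fin p) × ℝ) → EuclideanSpace ℝ (Fin p))
    (d : Fin n → EuclideanSpace ℝ (Fin p) × ℝ) (v : Fin p → Bool) :
    δ^2 * (∑ j, Set.indicator (Aset βhat Q j v) (fun _ => (1:ℝ)) d)
      ≤ ‖βhat d - bcube Q δ v‖^2 := by
  classical
  have hnorm : ‖βhat d - bcube Q δ v‖^2 = ∑ k, (βhat d k - bcube Q δ v k)^2 := by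
    rw [EuclideanSpace.norm_eq, Real.sq_sqrt (Finset.sum_nonneg fun k _ => sq_nonneg _)]
    refine Finset.sum_congr rfl fun k _ => ?_
    rw [show (βhat d - bcube Q δ v) k = βhat d k - bcube Q δ v k from rfl,
      Real.norm_eq_abs, sq_abs]
  rw [hnorm, ← orthog_norm_sum hQ (fun k => βhat d k - bcube Q δ v k), Finset.mul_sum]
  refine Finset.sum_le_sum fun j _ => ?_
  have hwj : (∑ k, Q k j * (βhat d k - bcube Q δ v k)) = wco βhat Q d j - δ * sgn v j := by
    rw [show (∑ k, Q k j * (βhat d k - bcube Q δ v k))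
        = (∑ k, Q k j * βhat d k) - ∑ k, Q k j * bcube Q δ v k by
      rw [← Finset.sum_sub_distrib]; exact Finset.sum_congr rfl fun k _ => by ring]
    rw [bcube_col hQ δ v j]
    rfl
  rw [hwj]
  set W := wco βhat Q d j with hW
  by_cases hv : v j
  · have hs : sgn v j = 1 := by simp [sgn, hv]
    rw [hs]
    by_cases hd : d ∈ Aset βhat Q j v
    · have hW0 : W < 0 := by
        have := hd
        simp only [Aset, Set.mem_setOf_eq, hv, if_true] at this
        exact this
      rw [Set.indicator_of_mem hd]
      nlinarith
    · rw [Set.indicator_of_notMem hd]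
      nlinarith [sq_nonneg (W - δ * 1)]
  · have hs : sgn v j = -1 := by simp [sgn, hv]
    rw [hs]
    by_cases hd : d ∈ Aset βhat Q j v
    · have hW0 : 0 ≤ W := by
        have := hd
        simp only [Aset, Set.mem_setOf_eq, hv, if_false] at this
        exact this
      rw [Set.indicator_of_mem hd]
      nlinarith
    · rw [Set.indicator_of_notMem hd]
      nlinarith [sq_nonneg (W - δ * (-1))]

lemma risk_bound {n p : ℕ} {a : ℝ} (ha : 0 < a)
    (μX : Measure (Fin n → EuclideanSpace ℝ (Fin p))) [IsProbabilityMeasure μX]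
    {βhat : (Fin n → EuclideanSpace ℝ (Fin p) × ℝ) → EuclideanSpace ℝ (Fin p)}
    (hβ : Measurable βhat) {Q : Matrix (Fin p) (Fin p) ℝ}
    (hQ : Q ∈ Matrix.orthogonalGroup (Fin p) ℝ) {δ : ℝ} (hδ : 0 ≤ δ) (v : Fin p → Bool) :
    ENNReal.ofReal (δ^2) * ∑ j, dataLaw n p a μX (bcube Q δ v) (Aset βhat Q j v)
      ≤ ∫⁻ d, ENNReal.ofReal (‖βhat d - bcube Q δ v‖^2) ∂(dataLaw n p a μX (bcube Q δ v)) := by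
  classical
  set μ := dataLaw n p a μX (bcube Q δ v) with hμ
  calc ENNReal.ofReal (δ^2) * ∑ j, μ (Aset βhat Q j v)
      = ∑ j, ∫⁻ d, Set.indicator (Aset βhat Q j v) (fun _ => ENNReal.ofReal (δ^2)) d ∂μ := by
        rw [Finset.mul_sum]
        refine Finset.sum_congr rfl fun j _ => ?_
        rw [lintegral_indicator (Aset_measurable hβ Q j v), setLIntegral_const]
    _ = ∫⁻ d, ∑ j, Set.indicator (Aset βhat Q j v) (fun _ => ENNReal.ofReal (δ^2)) d ∂μ := by
        rw [lintegral_finset_sum]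
        exact fun j _ => measurable_const.indicator (Aset_measurable hβ Q j v)
    _ ≤ ∫⁻ d, ENNReal.ofReal (‖βhat d - bcube Q δ v‖^2) ∂μ := by
        refine lintegral_mono fun d => ?_
        have h1 : (∑ j, Set.indicator (Aset βhat Q j v) (fun _ => ENNReal.ofReal (δ^2)) d)
            = ENNReal.ofReal (δ^2 * ∑ j, Set.indicator (Aset βhat Q j v) (fun _ => (1:ℝ)) d) := by
          rw [Finset.mul_sum, ENNReal.ofReal_sum_of_nonneg (fun j _ => by
            by_cases hd : d ∈ Aset βhat Q j v <;> simp [hd, sq_nonneg])]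
          refine Finset.sum_congr rfl fun j _ => ?_
          by_cases hd : d ∈ Aset βhat Q j v <;> simp [hd]
        rw [h1]
        exact ENNReal.ofReal_le_ofReal (pointwise_risk hQ hδ βhat d v)

lemma bcube_update_sub {p : ℕ} (Q : Matrix (Fin p) (Fin p) ℝ) (δ : ℝ) (v : Fin p → Bool)
    (j : Fin p) (k : Fin p) :
    bcube Q δ (Function.update v j (!v j)) k - bcube Q δ v k
      = ((sgn (Function.update v j (!v j)) j - sgn v j) * δ) * Q k j := by
  classical
  set v' := Function.update v j (!v j) with hv'
  have h1 : bcube Q δ v' k - bcube Q δ v k = δ * ∑ j', Q k j' * (sgn v' j' - sgn v j') := by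
    rw [show bcube Q δ v' k = δ * ∑ j', Q k j' * sgn v' j' from rfl,
      show bcube Q δ v k = δ * ∑ j', Q k j' * sgn v j' from rfl]
    rw [← mul_sub, ← Finset.sum_sub_distrib]
    congr 1
    exact Finset.sum_congr rfl fun j' _ => by ring
  rw [h1]
  rw [Finset.sum_eq_single j]
  · ring
  · intro j' _ hj'
    have : v' j' = v j' := Function.update_of_ne hj' _ v
    simp [sgn, this]
  · intro h; exact absurd (Finset.mem_univ j) h

lemma sgn_update_abs {p : ℕ} (v : Fin p → Bool) (j : Fin p) :
    |sgn (Function.update v j (!v j)) j - sgn v j| = 2 := by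
  have h : (Function.update v j (!v j)) j = !v j := Function.update_self _ _ _
  by_cases hv : v j <;> simp [sgn, h, hv]
  · norm_num
  · norm_num

/-- Key two-point (pairing) inequality. -/
lemma pair_bound {n p : ℕ} (hn : 0 < n) {a : ℝ} (ha : 0 < a)
    (μX : Measure (Fin n → EuclideanSpace ℝ (Fin p))) [IsProbabilityMeasure μX]
    {βhat : (Fin n → EuclideanSpace ℝ (Fin p) × ℝ) → EuclideanSpace ℝ (Fin p)}
    (hβ : Measurable βhat) (Q : Matrix (Fin p) (Fin p) ℝ)
    (hInt : ∀ j : Fin p, Integrable (fun x => ∑ i, |∑ k, x i k * Q k j|) μX)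
    {δ : ℝ} (hδ : 0 ≤ δ) (j : Fin p) (v : Fin p → Bool) :
    (1:ℝ≥0∞) ≤ dataLaw n p a μX (bcube Q δ v) (Aset βhat Q j v)
      + dataLaw n p a μX (bcube Q δ (Function.update v j (!v j)))
          (Aset βhat Q j (Function.update v j (!v j)))
      + ENNReal.ofReal (2 * δ * (∫ x, ∑ i, |∑ k, x i k * Q k j| ∂μX) / (2*a)) := by
  classical
  set v' := Function.update v j (!v j) with hv'
  have hA := Aset_measurable hβ Q j v
  have hfun : (fun x : Fin n → EuclideanSpace ℝ (Fin p) =>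
      ∑ i, |∑ k, x i k * (bcube Q δ v' k - bcube Q δ v k)|)
      = fun x => (2*δ) * ∑ i, |∑ k, x i k * Q k j| := by
    funext x
    rw [Finset.mul_sum]
    refine Finset.sum_congr rfl fun i _ => ?_
    have h1 : (∑ k, x i k * (bcube Q δ v' k - bcube Q δ v k))
        = ((sgn v' j - sgn v j) * δ) * ∑ k, x i k * Q k j := by
      rw [Finset.mul_sum]
      refine Finset.sum_congr rfl fun k _ => ?_
      rw [bcube_update_sub Q δ v j k]
      ring
    rw [h1, abs_mul, abs_mul, sgn_update_abs v j, abs_of_nonneg hδ]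
  have hIntd : Integrable (fun x : Fin n → EuclideanSpace ℝ (Fin p) =>
      ∑ i, |∑ k, x i k * (bcube Q δ v' k - bcube Q δ v k)|) μX := by
    rw [hfun]; exact (hInt j).const_mul _
  have hcomp := dataLaw_compare hn ha μX (bcube Q δ v) (bcube Q δ v') hA hIntd
  have hval : (∫ x, ∑ i, |∑ k, x i k * (bcube Q δ v' k - bcube Q δ v k)| ∂μX)
      = 2 * δ * ∫ x, ∑ i, |∑ k, x i k * Q k j| ∂μX := by
    rw [hfun, integral_const_mul]
  rw [hval] at hcomp
  haveI := dataLaw_prob (n := n) ha μX (bcube Q δ v')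
  have h1 : (1:ℝ≥0∞) = dataLaw n p a μX (bcube Q δ v') (Aset βhat Q j v)
      + dataLaw n p a μX (bcube Q δ v') ((Aset βhat Q j v)ᶜ) := by
    rw [measure_add_measure_compl hA, measure_univ]
  rw [h1, ← Aset_update_compl βhat Q j v, ← hv']
  refine le_trans (add_le_add_left hcomp _) ?_
  rw [add_right_comm]

/-- sum of the pairing inequality over the hypercube, in real numbers -/
lemma pairsum_bound {n p : ℕ} (hn : 0 < n) {a : ℝ} (ha : 0 < a)
    (μX : Measure (Fin n → EuclideanSpace ℝ (Fin p))) [IsProbabilityMeasure μX]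
    {βhat : (Fin n → EuclideanSpace ℝ (Fin p) × ℝ) → EuclideanSpace ℝ (Fin p)}
    (hβ : Measurable βhat) (Q : Matrix (Fin p) (Fin p) ℝ)
    (hInt : ∀ j : Fin p, Integrable (fun x => ∑ i, |∑ k, x i k * Q k j|) μX)
    {δ : ℝ} (hδ : 0 ≤ δ) (j : Fin p) :
    (2:ℝ)^p ≤ 2 * (∑ v : Fin p → Bool,
        (dataLaw n p a μX (bcube Q δ v) (Aset βhat Q j v)).toReal)
      + 2^p * (2 * δ * (∫ x, ∑ i, |∑ k, x i k * Q k j| ∂μX) / (2*a)) := by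
  classical
  have hSnn : 0 ≤ ∫ x, ∑ i, |∑ k, x i k * Q k j| ∂μX :=
    integral_nonneg fun x => Finset.sum_nonneg fun i _ => abs_nonneg _
  have hκnn : 0 ≤ 2 * δ * (∫ x, ∑ i, |∑ k, x i k * Q k j| ∂μX) / (2*a) := by positivity
  -- real version of pair_bound
  have hpairR : ∀ v : Fin p → Bool,
      (1:ℝ) ≤ (dataLaw n p a μX (bcube Q δ v) (Aset βhat Q j v)).toReal
        + (dataLaw n p a μX (bcube Q δ (Function.update v j (!v j)))
            (Aset βhat Q j (Function.update v j (!v j)))).toReal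
        + 2 * δ * (∫ x, ∑ i, |∑ k, x i k * Q k j| ∂μX) / (2*a) := by
    intro v
    haveI h1 := dataLaw_prob (n := n) ha μX (bcube Q δ v)
    haveI h2 := dataLaw_prob (n := n) ha μX (bcube Q δ (Function.update v j (!v j)))
    have hle := pair_bound hn ha μX hβ Q hInt hδ j v
    have hne1 : dataLaw n p a μX (bcube Q δ v) (Aset βhat Q j v) ≠ ⊤ :=
      (measure_lt_top _ _).ne
    have hne2 : dataLaw n p a μX (bcube Q δ (Function.update v j (!v j)))
        (Aset βhat Q j (Function.update v j (!v j))) ≠ ⊤ := (measure_lt_top _ _).ne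
    have := ENNReal.toReal_mono (by
      exact ENNReal.add_ne_top.2 ⟨ENNReal.add_ne_top.2 ⟨hne1, hne2⟩, ENNReal.ofReal_ne_top⟩) hle
    rw [ENNReal.toReal_one] at this
    rw [ENNReal.toReal_add (ENNReal.add_ne_top.2 ⟨hne1, hne2⟩) ENNReal.ofReal_ne_top,
      ENNReal.toReal_add hne1 hne2, ENNReal.toReal_ofReal hκnn] at this
    exact this
  -- sum over v, using the flip involution
  have hinv : Function.Involutive (fun v : Fin p → Bool => Function.update v j (!v j)) := by
    intro v
    funext l
    by_cases hl : l = j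
    · subst hl
      simp [Function.update_self]
    · simp [Function.update_of_ne hl]
  set e := hinv.toPerm with he
  have hsum := Finset.sum_le_sum (fun v (_ : v ∈ Finset.univ) => hpairR v)
  rw [Finset.sum_const, Finset.card_univ] at hsum
  have hcard : (Fintype.card (Fin p → Bool)) = 2^p := by
    rw [Fintype.card_fun, Fintype.card_bool, Fintype.card_fin]
  rw [hcard, nsmul_eq_mul] at hsum
  have hre : ∑ v : Fin p → Bool,
      ((dataLaw n p a μX (bcube Q δ v) (Aset βhat Q j v)).toReal
        + (dataLaw n p a μX (bcube Q δ (Function.update v j (!v j)))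
            (Aset βhat Q j (Function.update v j (!v j)))).toReal
        + 2 * δ * (∫ x, ∑ i, |∑ k, x i k * Q k j| ∂μX) / (2*a))
      = 2 * (∑ v : Fin p → Bool,
          (dataLaw n p a μX (bcube Q δ v) (Aset βhat Q j v)).toReal)
        + 2^p * (2 * δ * (∫ x, ∑ i, |∑ k, x i k * Q k j| ∂μX) / (2*a)) := by
    rw [Finset.sum_add_distrib, Finset.sum_add_distrib, Finset.sum_const, Finset.card_univ,
      hcard]
    have hflip : (∑ v : Fin p → Bool,
        (dataLaw n p a μX (bcube Q δ (Function.update v j (!v j)))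
            (Aset βhat Q j (Function.update v j (!v j)))).toReal)
        = ∑ v : Fin p → Bool, (dataLaw n p a μX (bcube Q δ v) (Aset βhat Q j v)).toReal := by
      exact Equiv.sum_comp e (fun v => (dataLaw n p a μX (bcube Q δ v) (Aset βhat Q j v)).toReal)
    rw [hflip]
    push_cast
    ring
  rw [hre] at hsum
  calc (2:ℝ)^p = ((2^p : ℕ) : ℝ) * 1 := by push_cast; ring
    _ ≤ _ := hsum

/-- Markov-type bound relating test errors to the failure event. -/
lemma markov_bound {n p : ℕ} {a : ℝ} (ha : 0 < a)
    (μX : Measure (Fin n → EuclideanSpace ℝ (Fin p))) [IsProbabilityMeasure μX]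
    {βhat : (Fin n → EuclideanSpace ℝ (Fin p) × ℝ) → EuclideanSpace ℝ (Fin p)}
    (hβ : Measurable βhat) {Q : Matrix (Fin p) (Fin p) ℝ}
    (hQ : Q ∈ Matrix.orthogonalGroup (Fin p) ℝ) {δ : ℝ} (hδ : 0 < δ)
    (τ : ℝ) (hτ : 0 ≤ τ) (hττ : τ^2 ≤ δ^2 * (p/8)) (v : Fin p → Bool) :
    ∑ j, dataLaw n p a μX (bcube Q δ v) (Aset βhat Q j v)
      ≤ (p:ℝ≥0∞)/8 + p * dataLaw n p a μX (bcube Q δ v)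
          {d | τ ≤ ‖βhat d - bcube Q δ v‖} := by
  classical
  set μ := dataLaw n p a μX (bcube Q δ v) with hμ
  haveI := dataLaw_prob (n := n) ha μX (bcube Q δ v)
  set G : Set (Fin n → EuclideanSpace ℝ (Fin p) × ℝ) :=
    {d | τ ≤ ‖βhat d - bcube Q δ v‖} with hG
  have hGm : MeasurableSet G := by
    refine measurableSet_le measurable_const ?_
    exact (hβ.sub measurable_const).norm
  have hsum : ∑ j, μ (Aset βhat Q j v)
      = ∫⁻ d, ∑ j, Set.indicator (Aset βhat Q j v) (fun _ => (1:ℝ≥0∞)) d ∂μ := by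
    rw [lintegral_finset_sum]
    · refine Finset.sum_congr rfl fun j _ => ?_
      rw [lintegral_indicator (Aset_measurable hβ Q j v), setLIntegral_const, one_mul]
    · exact fun j _ => measurable_const.indicator (Aset_measurable hβ Q j v)
  rw [hsum]
  have hpt : ∀ d, (∑ j, Set.indicator (Aset βhat Q j v) (fun _ => (1:ℝ≥0∞)) d)
      ≤ (p:ℝ≥0∞)/8 + Set.indicator G (fun _ => (p:ℝ≥0∞)) d := by
    intro d
    by_cases hd : d ∈ G
    · rw [Set.indicator_of_mem hd]
      have hb : (∑ j, Set.indicator (Aset βhat Q j v) (fun _ => (1:ℝ≥0∞)) d) ≤ (p:ℝ≥0∞) := by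
        have : (∑ j, Set.indicator (Aset βhat Q j v) (fun _ => (1:ℝ≥0∞)) d)
            ≤ ∑ _j : Fin p, (1:ℝ≥0∞) := by
          refine Finset.sum_le_sum fun j _ => ?_
          by_cases hdj : d ∈ Aset βhat Q j v <;> simp [hdj]
        simpa using this
      exact le_trans hb le_add_self
    · rw [Set.indicator_of_notMem hd, add_zero]
      have hdist : ‖βhat d - bcube Q δ v‖ < τ := by
        rw [hG, Set.mem_setOf_eq, not_le] at hd
        exact hd
      have hsq : ‖βhat d - bcube Q δ v‖^2 < τ^2 := by
        exact pow_lt_pow_left₀ hdist (norm_nonneg _) (by norm_num)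
      have hrisk := pointwise_risk hQ hδ.le βhat d v
      have hcount : (∑ j, Set.indicator (Aset βhat Q j v) (fun _ => (1:ℝ)) d) ≤ (p:ℝ)/8 := by
        nlinarith
      have hEnn : (∑ j, Set.indicator (Aset βhat Q j v) (fun _ => (1:ℝ≥0∞)) d)
          = ENNReal.ofReal (∑ j, Set.indicator (Aset βhat Q j v) (fun _ => (1:ℝ)) d) := by
        rw [ENNReal.ofReal_sum_of_nonneg (fun j _ => by
          by_cases hdj : d ∈ Aset βhat Q j v <;> simp [hdj])]
        refine Finset.sum_congr rfl fun j _ => ?_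
        by_cases hdj : d ∈ Aset βhat Q j v <;> simp [hdj]
      rw [hEnn]
      refine le_trans (ENNReal.ofReal_le_ofReal hcount) ?_
      rw [ENNReal.ofReal_div_of_pos (by norm_num)]
      simp [ENNReal.ofReal_natCast]
  calc ∫⁻ d, ∑ j, Set.indicator (Aset βhat Q j v) (fun _ => (1:ℝ≥0∞)) d ∂μ
      ≤ ∫⁻ d, ((p:ℝ≥0∞)/8 + Set.indicator G (fun _ => (p:ℝ≥0∞)) d) ∂μ := lintegral_mono hpt
    _ = (p:ℝ≥0∞)/8 + p * μ G := by
        rw [lintegral_add_left measurable_const, lintegral_const, measure_univ, mul_one,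
          lintegral_indicator hGm, setLIntegral_const]

lemma part1_claim {n p : ℕ} (hn : 0 < n) (hp : 0 < p) {a : ℝ} (ha : 0 < a)
    (μX : Measure (Fin n → EuclideanSpace ℝ (Fin p))) [IsProbabilityMeasure μX]
    {βhat : (Fin n → EuclideanSpace ℝ (Fin p) × ℝ) → EuclideanSpace ℝ (Fin p)}
    (hβ : Measurable βhat) {Q : Matrix (Fin p) (Fin p) ℝ}
    (hQ : Q ∈ Matrix.orthogonalGroup (Fin p) ℝ)
    (hInt : ∀ j : Fin p, Integrable (fun x => ∑ i, |∑ k, x i k * Q k j|) μX)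
    {c : ℝ} (hc : 0 < c)
    (hSc : ∀ j : Fin p, (∫ x, ∑ i, |∑ k, x i k * Q k j| ∂μX) ≤ c) :
    ENNReal.ofReal (a^2 * p / (16 * c^2)) ≤ ⨆ βstar : EuclideanSpace ℝ (Fin p),
      ∫⁻ d, ENNReal.ofReal (‖βhat d - βstar‖ ^ 2) ∂(dataLaw n p a μX βstar) := by
  classical
  set Sup := ⨆ βstar : EuclideanSpace ℝ (Fin p),
      ∫⁻ d, ENNReal.ofReal (‖βhat d - βstar‖ ^ 2) ∂(dataLaw n p a μX βstar) with hSup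
  by_cases htop : Sup = ⊤
  · rw [htop]; exact le_top
  set δ : ℝ := a / (2*c) with hδdef
  have hδ : 0 < δ := by positivity
  have hpR : (0:ℝ) < p := by exact_mod_cast hp
  have h2p : (0:ℝ) < 2^p := by positivity
  set Pr : Fin p → (Fin p → Bool) → ℝ :=
    fun j v => (dataLaw n p a μX (bcube Q δ v) (Aset βhat Q j v)).toReal with hPr
  have hPrnn : ∀ j v, 0 ≤ Pr j v := fun j v => ENNReal.toReal_nonneg
  -- lower bound on the column sums
  have hTr : ∀ j : Fin p, (2:ℝ)^p / 4 ≤ ∑ v : Fin p → Bool, Pr j v := by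
    intro j
    have hps := pairsum_bound hn ha μX hβ Q hInt hδ.le j
    have hS0 : 0 ≤ ∫ x, ∑ i, |∑ k, x i k * Q k j| ∂μX :=
      integral_nonneg fun x => Finset.sum_nonneg fun i _ => abs_nonneg _
    have hκ : 2 * δ * (∫ x, ∑ i, |∑ k, x i k * Q k j| ∂μX) / (2*a) ≤ 1/2 := by
      have heq : 2 * δ * (∫ x, ∑ i, |∑ k, x i k * Q k j| ∂μX) / (2*a)
          = (∫ x, ∑ i, |∑ k, x i k * Q k j| ∂μX) / (2*c) := by
        rw [hδdef]; field_simp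
      rw [heq, div_le_div_iff₀ (by linarith) (by norm_num)]
      linarith [hSc j]
    have hmul : (2:ℝ)^p * (2 * δ * (∫ x, ∑ i, |∑ k, x i k * Q k j| ∂μX) / (2*a))
        ≤ 2^p * (1/2) := by
      exact mul_le_mul_of_nonneg_left hκ (by positivity)
    nlinarith [hps, hmul]
  -- upper bound via the risk
  have hriskR : ∀ v : Fin p → Bool, δ^2 * (∑ j, Pr j v) ≤ Sup.toReal := by
    intro v
    haveI := dataLaw_prob (n := n) ha μX (bcube Q δ v)
    have h1 := risk_bound ha μX hβ hQ hδ.le v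
    have h2 : (∫⁻ d, ENNReal.ofReal (‖βhat d - bcube Q δ v‖^2)
        ∂(dataLaw n p a μX (bcube Q δ v))) ≤ Sup := le_iSup
      (fun βstar => ∫⁻ d, ENNReal.ofReal (‖βhat d - βstar‖^2) ∂(dataLaw n p a μX βstar))
      (bcube Q δ v)
    have h3 := ENNReal.toReal_mono htop (le_trans h1 h2)
    have h4 : (ENNReal.ofReal (δ^2) *
        ∑ j, dataLaw n p a μX (bcube Q δ v) (Aset βhat Q j v)).toReal
        = δ^2 * ∑ j, Pr j v := by
      rw [ENNReal.toReal_mul, ENNReal.toReal_ofReal (sq_nonneg _), ENNReal.toReal_sum]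
      exact fun j _ => (measure_lt_top _ _).ne
    rw [h4] at h3
    exact h3
  -- combine
  have hcomb : δ^2 * (p * (2^p/4)) ≤ 2^p * Sup.toReal := by
    have h1 : ∑ v : Fin p → Bool, δ^2 * (∑ j, Pr j v)
        ≤ ∑ _v : Fin p → Bool, Sup.toReal :=
      Finset.sum_le_sum fun v _ => hriskR v
    rw [Finset.sum_const, Finset.card_univ] at h1
    have hcard : (Fintype.card (Fin p → Bool)) = 2^p := by
      rw [Fintype.card_fun, Fintype.card_bool, Fintype.card_fin]
    rw [hcard, nsmul_eq_mul] at h1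
    have h2 : ∑ v : Fin p → Bool, δ^2 * (∑ j, Pr j v)
        = δ^2 * ∑ j, ∑ v : Fin p → Bool, Pr j v := by
      rw [← Finset.mul_sum]
      congr 1
      exact Finset.sum_comm
    rw [h2] at h1
    have h3 : (p:ℝ) * (2^p/4) ≤ ∑ j, ∑ v : Fin p → Bool, Pr j v := by
      have := Finset.sum_le_sum fun j (_ : j ∈ Finset.univ) => hTr j
      rw [Finset.sum_const, Finset.card_univ, Fintype.card_fin, nsmul_eq_mul] at this
      exact this
    calc δ^2 * (p * (2^p/4)) ≤ δ^2 * ∑ j, ∑ v : Fin p → Bool, Pr j v := by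
          exact mul_le_mul_of_nonneg_left h3 (sq_nonneg _)
      _ ≤ ((2:ℕ)^p : ℝ) * Sup.toReal := by exact_mod_cast h1
      _ = 2^p * Sup.toReal := by push_cast; ring
  have hfinal : a^2 * p / (16 * c^2) ≤ Sup.toReal := by
    have hδ2 : δ^2 = a^2/(4*c^2) := by rw [hδdef]; field_simp; ring
    have heq : δ^2 * (p * (2^p/4)) = 2^p * (a^2 * p/(16*c^2)) := by
      rw [hδ2]; field_simp; ring
    rw [heq] at hcomb
    nlinarith [hcomb, h2p]
  exact ENNReal.ofReal_le_of_le_toReal hfinal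

lemma part2_claim {n p : ℕ} (hn : 0 < n) (hp : 0 < p) {a : ℝ} (ha : 0 < a)
    (μX : Measure (Fin n → EuclideanSpace ℝ (Fin p))) [IsProbabilityMeasure μX]
    {βhat : (Fin n → EuclideanSpace ℝ (Fin p) × ℝ) → EuclideanSpace ℝ (Fin p)}
    (hβ : Measurable βhat) {Q : Matrix (Fin p) (Fin p) ℝ}
    (hQ : Q ∈ Matrix.orthogonalGroup (Fin p) ℝ)
    (hInt : ∀ j : Fin p, Integrable (fun x => ∑ i, |∑ k, x i k * Q k j|) μX)
    {I : ℝ} (hIpos : 0 < I)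
    (hSc : ∀ j : Fin p, (∫ x, ∑ i, |∑ k, x i k * Q k j| ∂μX) ≤ 5/4 * I)
    {R : ℝ} (hRI : R = a^2 * p / (16 * I^2)) :
    ((2 : ℝ≥0∞) ^ 8)⁻¹ ≤ ⨆ βstar : EuclideanSpace ℝ (Fin p),
      dataLaw n p a μX βstar {d | Real.sqrt (R / 2) ≤ ‖βhat d - βstar‖} := by
  classical
  set Sup := ⨆ βstar : EuclideanSpace ℝ (Fin p),
      dataLaw n p a μX βstar {d | Real.sqrt (R / 2) ≤ ‖βhat d - βstar‖} with hSup
  by_cases htop : Sup = ⊤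
  · rw [htop]; exact le_top
  set δ : ℝ := a / (2*I) with hδdef
  have hδ : 0 < δ := by positivity
  have hpR : (0:ℝ) < p := by exact_mod_cast hp
  have h2p : (0:ℝ) < 2^p := by positivity
  have hR0 : 0 ≤ R := by rw [hRI]; positivity
  set τ : ℝ := Real.sqrt (R/2) with hτdef
  have hτ0 : 0 ≤ τ := Real.sqrt_nonneg _
  have hττ : τ^2 ≤ δ^2 * (p/8) := by
    rw [hτdef, Real.sq_sqrt (by linarith), hRI, hδdef]
    have hI' : I ≠ 0 := ne_of_gt hIpos
    field_simp
    ring_nf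
    exact le_refl _
  set Pr : Fin p → (Fin p → Bool) → ℝ :=
    fun j v => (dataLaw n p a μX (bcube Q δ v) (Aset βhat Q j v)).toReal with hPr
  have hPrnn : ∀ j v, 0 ≤ Pr j v := fun j v => ENNReal.toReal_nonneg
  have hTr : ∀ j : Fin p, (3/16) * (2:ℝ)^p ≤ ∑ v : Fin p → Bool, Pr j v := by
    intro j
    have hps := pairsum_bound hn ha μX hβ Q hInt hδ.le j
    have hS0 : 0 ≤ ∫ x, ∑ i, |∑ k, x i k * Q k j| ∂μX :=
      integral_nonneg fun x => Finset.sum_nonneg fun i _ => abs_nonneg _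
    have hκ : 2 * δ * (∫ x, ∑ i, |∑ k, x i k * Q k j| ∂μX) / (2*a) ≤ 5/8 := by
      have heq : 2 * δ * (∫ x, ∑ i, |∑ k, x i k * Q k j| ∂μX) / (2*a)
          = (∫ x, ∑ i, |∑ k, x i k * Q k j| ∂μX) / (2*I) := by
        rw [hδdef]; field_simp
      rw [heq, div_le_div_iff₀ (by linarith) (by norm_num)]
      linarith [hSc j]
    have hmul : (2:ℝ)^p * (2 * δ * (∫ x, ∑ i, |∑ k, x i k * Q k j| ∂μX) / (2*a))
        ≤ 2^p * (5/8) := mul_le_mul_of_nonneg_left hκ (by positivity)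
    nlinarith [hps, hmul]
  -- Markov step, in real numbers
  have hmarkovR : ∀ v : Fin p → Bool, (∑ j, Pr j v)
      ≤ (p:ℝ)/8 + p * Sup.toReal := by
    intro v
    haveI := dataLaw_prob (n := n) ha μX (bcube Q δ v)
    have hm := markov_bound ha μX hβ hQ hδ τ hτ0 hττ v
    have hne1 : ((p:ℝ≥0∞)/8) ≠ ⊤ :=
      (ENNReal.div_lt_top (by simp) (by norm_num)).ne
    have hne2 : (p:ℝ≥0∞) * dataLaw n p a μX (bcube Q δ v)
        {d | τ ≤ ‖βhat d - bcube Q δ v‖} ≠ ⊤ :=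
      ENNReal.mul_ne_top (by simp) (measure_lt_top _ _).ne
    have h3 := ENNReal.toReal_mono (ENNReal.add_ne_top.2 ⟨hne1, hne2⟩) hm
    rw [ENNReal.toReal_add hne1 hne2, ENNReal.toReal_sum
      (fun j _ => (measure_lt_top _ _).ne), ENNReal.toReal_mul, ENNReal.toReal_div] at h3
    have hcast : ((p:ℝ≥0∞)).toReal = (p:ℝ) := rfl
    rw [hcast, ENNReal.toReal_ofNat] at h3
    refine le_trans h3 ?_
    have hGle : (dataLaw n p a μX (bcube Q δ v)
        {d | τ ≤ ‖βhat d - bcube Q δ v‖}).toReal ≤ Sup.toReal := by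
      refine ENNReal.toReal_mono htop ?_
      rw [hSup]
      exact le_iSup (fun βstar => dataLaw n p a μX βstar
        {d | τ ≤ ‖βhat d - βstar‖}) (bcube Q δ v)
    have := mul_le_mul_of_nonneg_left hGle (le_of_lt hpR)
    linarith
  -- combine
  have hcomb : (p:ℝ) * ((3/16) * 2^p) ≤ 2^p * ((p:ℝ)/8 + p * Sup.toReal) := by
    have h1 : ∑ v : Fin p → Bool, (∑ j, Pr j v)
        ≤ ∑ _v : Fin p → Bool, ((p:ℝ)/8 + p * Sup.toReal) :=
      Finset.sum_le_sum fun v _ => hmarkovR v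
    rw [Finset.sum_const, Finset.card_univ] at h1
    have hcard : (Fintype.card (Fin p → Bool)) = 2^p := by
      rw [Fintype.card_fun, Fintype.card_bool, Fintype.card_fin]
    rw [hcard, nsmul_eq_mul] at h1
    have h2 : ∑ v : Fin p → Bool, (∑ j, Pr j v) = ∑ j, ∑ v : Fin p → Bool, Pr j v :=
      Finset.sum_comm
    rw [h2] at h1
    have h3 : (p:ℝ) * ((3/16) * 2^p) ≤ ∑ j, ∑ v : Fin p → Bool, Pr j v := by
      have := Finset.sum_le_sum fun j (_ : j ∈ Finset.univ) => hTr j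
      rw [Finset.sum_const, Finset.card_univ, Fintype.card_fin, nsmul_eq_mul] at this
      exact this
    calc (p:ℝ) * ((3/16) * 2^p) ≤ ∑ j, ∑ v : Fin p → Bool, Pr j v := h3
      _ ≤ ((2:ℕ)^p : ℝ) * ((p:ℝ)/8 + p * Sup.toReal) := by exact_mod_cast h1
      _ = 2^p * ((p:ℝ)/8 + p * Sup.toReal) := by push_cast; ring
  have hfinal : 1/16 ≤ Sup.toReal := by
    have hSnn : 0 ≤ Sup.toReal := ENNReal.toReal_nonneg
    nlinarith [hcomb, h2p, hpR, mul_pos h2p hpR]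
  have h116 : ENNReal.ofReal (1/16) ≤ Sup := ENNReal.ofReal_le_of_le_toReal hfinal
  refine le_trans ?_ h116
  rw [ENNReal.ofReal_div_of_pos (by norm_num), ENNReal.ofReal_one, ENNReal.ofReal_ofNat,
    one_div]
  rw [ENNReal.inv_le_inv]
  norm_num

/- STATEMENT 12 (Theorem `theorem:lower_bound`, minimax lower bound).
With ℛ := a²p/(16(inf_{R ∈ 𝒪} max_{j} 𝔼_X Σ_i |(X_i^⊤R)_j|)²), every estimator β̂ (a
measurable function of the data) satisfies sup_{β*} 𝔼‖β̂ − β*‖² ≥ ℛ and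
sup_{β*} ℙ(‖β̂ − β*‖ ≥ √(ℛ/2)) ≥ 2⁻⁸. -/
theorem minimax_lower_bound_uniform_noise
    {n p : ℕ} (hn : 0 < n) (hp : 0 < p) (a : ℝ) (ha : 0 < a)
    (μX : Measure (Fin n → EuclideanSpace ℝ (Fin p))) [IsProbabilityMeasure μX]
    (R : ℝ)
    (hRdef : R = a ^ 2 * p / (16 *
      (⨅ Rot : Matrix.orthogonalGroup (Fin p) ℝ, ⨆ j : Fin p,
        ∫ x, ∑ i, |∑ k, x i k * (Rot : Matrix (Fin p) (Fin p) ℝ) k j| ∂μX) ^ 2)) :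
    ∀ βhat : (Fin n → EuclideanSpace ℝ (Fin p) × ℝ) → EuclideanSpace ℝ (Fin p),
      Measurable βhat →
      (ENNReal.ofReal R ≤ ⨆ βstar : EuclideanSpace ℝ (Fin p),
        ∫⁻ d, ENNReal.ofReal (‖βhat d - βstar‖ ^ 2) ∂(dataLaw n p a μX βstar)) ∧
      ((2 : ℝ≥0∞) ^ 8)⁻¹ ≤ ⨆ βstar : EuclideanSpace ℝ (Fin p),
        dataLaw n p a μX βstar {d | Real.sqrt (R / 2) ≤ ‖βhat d - βstar‖} := by
  classical
  intro βhat hβ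
  haveI : Nonempty (Fin p) := ⟨⟨0, hp⟩⟩
  set I : ℝ := ⨅ Rot : Matrix.orthogonalGroup (Fin p) ℝ, ⨆ j : Fin p,
      ∫ x, ∑ i, |∑ k, x i k * (Rot : Matrix (Fin p) (Fin p) ℝ) k j| ∂μX with hIdef
  have hpR : (0:ℝ) < p := by exact_mod_cast hp
  have hI0 : 0 ≤ I := by
    rw [hIdef]
    refine le_ciInf fun Rot => ?_
    refine le_ciSup_of_le (Set.Finite.bddAbove (Set.finite_range _)) (⟨0, hp⟩ : Fin p) ?_
    exact integral_nonneg fun x => Finset.sum_nonneg fun i _ => abs_nonneg _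
  constructor
  · -- part (i)
    rcases le_or_gt R 0 with hR0 | hR0
    · rw [ENNReal.ofReal_of_nonpos hR0]
      exact zero_le
    · have hIpos : 0 < I := by
        rcases eq_or_lt_of_le hI0 with heq | hlt
        · exfalso
          rw [← heq] at hRdef
          norm_num at hRdef
          rw [hRdef] at hR0
          exact lt_irrefl _ hR0
        · exact hlt
      have hIntall := integrable_of_iInf_pos hp μX (hIdef ▸ hIpos)
      by_contra hcon
      push_neg at hcon
      set Sup := ⨆ βstar : EuclideanSpace ℝ (Fin p),
          ∫⁻ d, ENNReal.ofReal (‖βhat d - βstar‖ ^ 2) ∂(dataLaw n p a μX βstar) with hSupd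
      have hfin : Sup ≠ ⊤ := ne_top_of_lt hcon
      have hr : Sup.toReal < R := ENNReal.toReal_lt_of_lt_ofReal hcon
      have hr0 : 0 ≤ Sup.toReal := ENNReal.toReal_nonneg
      set r' : ℝ := (Sup.toReal + R)/2 with hr'def
      have hr'pos : 0 < r' := by rw [hr'def]; linarith
      have hrr' : Sup.toReal < r' := by rw [hr'def]; linarith
      have hr'R : r' < R := by rw [hr'def]; linarith
      set c : ℝ := Real.sqrt (a^2 * p/(16*r')) with hcdef
      have hq : 0 < a^2 * p/(16*r') := by positivity
      have hc0 : 0 < c := Real.sqrt_pos.2 hq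
      have hc2 : c^2 = a^2 * p/(16*r') := Real.sq_sqrt hq.le
      have hI2 : I^2 = a^2 * p/(16*R) := by
        rw [hRdef]
        field_simp
      have hsqlt : I^2 < c^2 := by
        rw [hI2, hc2]
        exact div_lt_div_of_pos_left (by positivity) (by linarith) (by linarith)
      have hIc : I < c := by nlinarith
      obtain ⟨Rot, hRot⟩ := exists_lt_of_ciInf_lt (lt_of_eq_of_lt hIdef.symm hIc)
      have hSc : ∀ j : Fin p, (∫ x, ∑ i,
          |∑ k, x i k * (Rot : Matrix (Fin p) (Fin p) ℝ) k j| ∂μX) ≤ c := by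
        intro j
        refine le_trans ?_ hRot.le
        exact le_ciSup (f := fun j : Fin p => ∫ x, ∑ i,
          |∑ k, x i k * (Rot : Matrix (Fin p) (Fin p) ℝ) k j| ∂μX)
          (Set.Finite.bddAbove (Set.finite_range _)) j
      have hInt : ∀ j : Fin p, Integrable (fun x => ∑ i,
          |∑ k, x i k * (Rot : Matrix (Fin p) (Fin p) ℝ) k j|) μX := by
        intro j
        exact hIntall (WithLp.toLp 2 (fun k => (Rot : Matrix (Fin p) (Fin p) ℝ) k j))
      have hclaim := part1_claim hn hp ha μX hβ (SetLike.coe_mem Rot) hInt hc0 hSc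
      have heqr : a^2 * (p:ℝ) / (16*c^2) = r' := by
        rw [hc2]
        field_simp
      rw [heqr] at hclaim
      have hlt2 : Sup < ENNReal.ofReal r' := by
        rw [← ENNReal.ofReal_toReal hfin]
        exact (ENNReal.ofReal_lt_ofReal_iff hr'pos).2 hrr'
      exact absurd (lt_of_lt_of_le hlt2 hclaim) (lt_irrefl _)
  · -- part (ii)
    rcases le_or_gt R 0 with hR0 | hR0
    · have hsqrt0 : Real.sqrt (R/2) = 0 := Real.sqrt_eq_zero'.2 (by linarith)
      refine le_trans ?_ (le_iSup (fun βstar => dataLaw n p a μX βstar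
        {d | Real.sqrt (R / 2) ≤ ‖βhat d - βstar‖}) (0 : EuclideanSpace ℝ (Fin p)))
      have huniv : {d | Real.sqrt (R / 2) ≤ ‖βhat d - (0 : EuclideanSpace ℝ (Fin p))‖}
          = Set.univ := by
        refine Set.eq_univ_of_forall fun d => ?_
        rw [Set.mem_setOf_eq, hsqrt0]
        exact norm_nonneg _
      rw [huniv]
      haveI := dataLaw_prob (n := n) ha μX (0 : EuclideanSpace ℝ (Fin p))
      rw [measure_univ]
      exact ENNReal.inv_le_one.2 (by norm_num)
    · have hIpos : 0 < I := by
        rcases eq_or_lt_of_le hI0 with heq | hlt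
        · exfalso
          rw [← heq] at hRdef
          norm_num at hRdef
          rw [hRdef] at hR0
          exact lt_irrefl _ hR0
        · exact hlt
      have hIntall := integrable_of_iInf_pos hp μX (hIdef ▸ hIpos)
      obtain ⟨Rot, hRot⟩ := exists_lt_of_ciInf_lt
        (lt_of_eq_of_lt hIdef.symm (show I < 5/4 * I by linarith))
      have hSc : ∀ j : Fin p, (∫ x, ∑ i,
          |∑ k, x i k * (Rot : Matrix (Fin p) (Fin p) ℝ) k j| ∂μX) ≤ 5/4 * I := by
        intro j
        refine le_trans ?_ hRot.le
        exact le_ciSup (f := fun j : Fin p => ∫ x, ∑ i,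
          |∑ k, x i k * (Rot : Matrix (Fin p) (Fin p) ℝ) k j| ∂μX)
          (Set.Finite.bddAbove (Set.finite_range _)) j
      have hInt : ∀ j : Fin p, Integrable (fun x => ∑ i,
          |∑ k, x i k * (Rot : Matrix (Fin p) (Fin p) ℝ) k j|) μX := by
        intro j
        exact hIntall (WithLp.toLp 2 (fun k => (Rot : Matrix (Fin p) (Fin p) ℝ) k j))
      exact part2_claim hn hp ha μX hβ (SetLike.coe_mem Rot) hInt hIpos hSc hRdef

end
end

section
/- For the random design X_i ~ U(√p{v_1,…,v_p}), where v_1,…,v_p is an orthonormal basis of ℝ^p and the X_i are i.i.d. for i ∈ [n], the minimax quantity ℛ := a²p / (16 (inf_{R ∈ 𝒪} max_{j ∈ [p]} 𝔼_X Σ_{i ∈ [n]} |(X_i^⊤ R)_j|)²) equals a²p² / (16 n²). -/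
open MeasureTheory Matrix
open scoped ENNReal

noncomputable section

lemma my_pi_map_eval {ι : Type*} [Fintype ι] [DecidableEq ι] {α : ι → Type*}
    [∀ i, MeasurableSpace (α i)] (μ : ∀ i, Measure (α i)) [∀ i, IsProbabilityMeasure (μ i)]
    (i : ι) : (Measure.pi μ).map (Function.eval i) = μ i := by
  ext s hs
  rw [Measure.map_apply (measurable_pi_apply i) hs, Set.eval_preimage, Measure.pi_pi]
  rw [Fintype.prod_eq_single i (fun j hj => by simp [Function.update_of_ne hj])]
  simp

lemma my_integrable_dirac {α E : Type*} [MeasurableSpace α] [MeasurableSingletonClass α]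
    [NormedAddCommGroup E] {f : α → E} (hf : StronglyMeasurable f) (x : α) :
    Integrable f (Measure.dirac x) :=
  ⟨hf.aestronglyMeasurable, by simp [HasFiniteIntegral, lintegral_dirac]⟩

/- STATEMENT 13 (Corollary after Theorem `theorem:lower_bound`).
For the design X_i i.i.d. uniform on √p{v_1,…,v_p} (v an orthonormal basis of ℝ^p), the
minimax quantity ℛ = a²p/(16(inf_{R ∈ 𝒪} max_j 𝔼_X Σ_i |(X_i^⊤R)_j|)²) equals a²p²/(16n²). -/
theorem minimax_quantity_orthobasis_design
    {n p : ℕ} (hn : 0 < n) (hp : 0 < p) (a : ℝ) (ha : 0 < a)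
    (v : Fin p → EuclideanSpace ℝ (Fin p)) (hv : Orthonormal ℝ v) :
    a ^ 2 * p / (16 *
      (⨅ Rot : Matrix.orthogonalGroup (Fin p) ℝ, ⨆ j : Fin p,
        ∫ x, ∑ i, |∑ k, x i k * (Rot : Matrix (Fin p) (Fin p) ℝ) k j|
          ∂(Measure.pi fun _ : Fin n =>
              (p : ℝ≥0∞)⁻¹ • ∑ l : Fin p, Measure.dirac (Real.sqrt p • v l))) ^ 2) =
    a ^ 2 * p ^ 2 / (16 * n ^ 2) := by
  haveI : Nonempty (Fin p) := Fin.pos_iff_nonempty.mp hp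
  have hp0 : (p : ℝ) ≠ 0 := by exact_mod_cast hp.ne'
  have hn0 : (n : ℝ) ≠ 0 := by exact_mod_cast hn.ne'
  have hsp : (0:ℝ) < Real.sqrt p := Real.sqrt_pos.mpr (by positivity)
  -- the base probability measure
  set μ0 : Measure (EuclideanSpace ℝ (Fin p)) :=
    (p : ℝ≥0∞)⁻¹ • ∑ l : Fin p, Measure.dirac (Real.sqrt p • v l) with hμ0def
  haveI : IsProbabilityMeasure μ0 := by
    constructor
    simp [hμ0def, ENNReal.inv_mul_cancel, hp.ne', Measure.finset_sum_apply]
  set π : Measure (Fin n → EuclideanSpace ℝ (Fin p)) := Measure.pi fun _ : Fin n => μ0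
    with hπdef
  -- integral of a continuous function against μ0
  have hμ0int : ∀ f : EuclideanSpace ℝ (Fin p) → ℝ, Continuous f →
      Integrable f μ0 ∧ ∫ y, f y ∂μ0 = (p : ℝ)⁻¹ * ∑ l, f (Real.sqrt p • v l) := by
    intro f hf
    have hint : Integrable f (∑ l : Fin p, Measure.dirac (Real.sqrt p • v l)) :=
      integrable_finset_sum_measure.mpr (fun l _ => my_integrable_dirac hf.stronglyMeasurable _)
    constructor
    · exact hint.smul_measure (by simp [hp.ne'])
    · rw [hμ0def, integral_smul_measure, integral_finset_sum_measure
        (fun l _ => my_integrable_dirac hf.stronglyMeasurable _)]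
      simp [integral_dirac]
  -- orthonormality as a matrix identity
  set V : Matrix (Fin p) (Fin p) ℝ := Matrix.of (fun l k => v l k) with hVdef
  have hVV : ∀ l m, ∑ k, v l k * v m k = if l = m then 1 else 0 := by
    intro l m
    have := (orthonormal_iff_ite (𝕜 := ℝ)).mp hv l m
    simpa [PiLp.inner_apply, RCLike.inner_apply, conj_trivial, mul_comm] using this
  have hVVt : V * Vᵀ = 1 := by
    ext l m
    simp [hVdef, Matrix.mul_apply, Matrix.one_apply, hVV l m]
  have hVmem : V ∈ Matrix.orthogonalGroup (Fin p) ℝ := by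
    rw [Matrix.mem_orthogonalGroup_iff]
    simpa [Matrix.star_eq_conjTranspose] using hVVt
  -- value of the inner integral
  set C : ℝ := n * ((p : ℝ)⁻¹ * Real.sqrt p) with hCdef
  have hC : 0 < C := by positivity
  have hg : ∀ (R : Matrix (Fin p) (Fin p) ℝ) (j : Fin p),
      Continuous (fun y : EuclideanSpace ℝ (Fin p) => |∑ k, y k * R k j|) := fun R j =>
    (continuous_finset_sum _ fun k _ =>
      ((EuclideanSpace.proj k).continuous.mul continuous_const)).abs
  have key : ∀ (R : Matrix (Fin p) (Fin p) ℝ) (j : Fin p),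
      ∫ x, ∑ i, |∑ k, x i k * R k j| ∂π = C * ∑ l, |∑ k, V l k * R k j| := by
    intro R j
    have hi : ∀ i : Fin n,
        Integrable (fun x : Fin n → EuclideanSpace ℝ (Fin p) => |∑ k, x i k * R k j|) π := by
      intro i
      have h1 := (hμ0int _ (hg R j)).1
      rw [← my_pi_map_eval (fun _ : Fin n => μ0) i] at h1
      exact (integrable_map_measure (hg R j).aestronglyMeasurable
        (measurable_pi_apply i).aemeasurable).mp h1
    rw [integral_finset_sum _ (fun i _ => hi i)]
    have hone : ∀ i : Fin n, ∫ x, |∑ k, x i k * R k j| ∂π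
        = (p : ℝ)⁻¹ * ∑ l, |∑ k, (Real.sqrt p • v l) k * R k j| := by
      intro i
      rw [← (hμ0int _ (hg R j)).2, ← my_pi_map_eval (fun _ : Fin n => μ0) i,
        integral_map (measurable_pi_apply i).aemeasurable (hg R j).aestronglyMeasurable]
    have habs : ∀ l : Fin p, |∑ k, (Real.sqrt p • v l) k * R k j|
        = Real.sqrt p * |∑ k, v l k * R k j| := by
      intro l
      have : (∑ k, (Real.sqrt p • v l) k * R k j) = Real.sqrt p * ∑ k, v l k * R k j := by
        rw [Finset.mul_sum]
        exact Finset.sum_congr rfl fun k _ => by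
          simp [PiLp.smul_apply, smul_eq_mul, mul_assoc]
      rw [this, abs_mul, abs_of_nonneg hsp.le]
    simp only [hone, habs]
    rw [Finset.sum_const, Finset.card_univ, Fintype.card_fin, nsmul_eq_mul]
    simp only [hCdef, hVdef, Matrix.of_apply]
    rw [← Finset.mul_sum]
    ring
  -- rewriting the sup
  have hsup : ∀ R : Matrix.orthogonalGroup (Fin p) ℝ,
      (⨆ j : Fin p, ∫ x, ∑ i, |∑ k, x i k * (R : Matrix (Fin p) (Fin p) ℝ) k j| ∂π)
        = ⨆ j : Fin p, C * ∑ l, |∑ k, V l k * (R : Matrix (Fin p) (Fin p) ℝ) k j| :=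
    fun R => iSup_congr fun j => key _ j
  -- lower bound on each column sum
  have hcol : ∀ R : Matrix.orthogonalGroup (Fin p) ℝ, ∀ j : Fin p,
      1 ≤ ∑ l, |∑ k, V l k * (R : Matrix (Fin p) (Fin p) ℝ) k j| := by
    intro R j
    set M : Matrix (Fin p) (Fin p) ℝ := V * R with hM
    have hMmem : M ∈ Matrix.orthogonalGroup (Fin p) ℝ := mul_mem hVmem R.2
    have hMcol : ∑ l, M l j ^ 2 = 1 := by
      have h1 : star M * M = 1 := Matrix.mem_unitaryGroup_iff'.mp hMmem
      have h2 := Matrix.ext_iff.mpr h1 j j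
      simpa [Matrix.mul_apply, Matrix.star_eq_conjTranspose, Matrix.conjTranspose_apply,
        Matrix.one_apply, sq] using h2
    have hle : ∀ l : Fin p, M l j ^ 2 ≤ |M l j| := by
      intro l
      have h2 : M l j ^ 2 ≤ 1 := by
        have h4 : M l j ^ 2 ≤ ∑ x : Fin p, M x j ^ 2 :=
          Finset.single_le_sum (f := fun x => M x j ^ 2) (fun l _ => sq_nonneg _)
            (Finset.mem_univ l)
        linarith
      have h3 : |M l j| ≤ 1 := (sq_le_one_iff_abs_le_one _).mp h2
      nlinarith [abs_nonneg (M l j), sq_abs (M l j)]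
    calc (1:ℝ) = ∑ l, M l j ^ 2 := hMcol.symm
      _ ≤ ∑ l, |M l j| := Finset.sum_le_sum fun l _ => hle l
      _ = ∑ l, |∑ k, V l k * (R : Matrix (Fin p) (Fin p) ℝ) k j| := by
          simp [hM, Matrix.mul_apply]
  -- the minimizer
  have hR₀mem : Vᵀ ∈ Matrix.orthogonalGroup (Fin p) ℝ := by
    rw [Matrix.mem_orthogonalGroup_iff]
    simpa [Matrix.star_eq_conjTranspose] using mul_eq_one_comm.mp hVVt
  set R₀ : Matrix.orthogonalGroup (Fin p) ℝ := ⟨Vᵀ, hR₀mem⟩ with hR₀def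
  have hR₀ : ∀ j : Fin p, ∑ l, |∑ k, V l k * (R₀ : Matrix (Fin p) (Fin p) ℝ) k j| = 1 := by
    intro j
    have h1 : ∀ l : Fin p, ∑ k, V l k * V j k = if l = j then 1 else 0 := fun l => by
      simpa [hVdef] using hVV l j
    simp [hR₀def, h1, apply_ite abs]
  have hle1 : ∀ R : Matrix.orthogonalGroup (Fin p) ℝ,
      C ≤ ⨆ j : Fin p, C * ∑ l, |∑ k, V l k * (R : Matrix (Fin p) (Fin p) ℝ) k j| := by
    intro R
    have j₀ : Fin p := Classical.arbitrary (Fin p)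
    refine le_trans (le_mul_of_one_le_right hC.le (hcol R j₀)) ?_
    exact le_ciSup (f := fun j : Fin p =>
      C * ∑ l, |∑ k, V l k * (R : Matrix (Fin p) (Fin p) ℝ) k j|)
      (Set.Finite.bddAbove (Set.finite_range _)) j₀
  have hinf : (⨅ Rot : Matrix.orthogonalGroup (Fin p) ℝ, ⨆ j : Fin p,
      ∫ x, ∑ i, |∑ k, x i k * (Rot : Matrix (Fin p) (Fin p) ℝ) k j| ∂π) = C := by
    apply le_antisymm
    · have hval : (⨆ j : Fin p,
          ∫ x, ∑ i, |∑ k, x i k * (R₀ : Matrix (Fin p) (Fin p) ℝ) k j| ∂π) = C := by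
        rw [hsup R₀]
        rw [show (fun j : Fin p => C * ∑ l, |∑ k, V l k *
            (R₀ : Matrix (Fin p) (Fin p) ℝ) k j|) = fun _ : Fin p => C from
          funext fun j => by rw [hR₀ j, mul_one]]
        exact ciSup_const
      refine le_trans (ciInf_le ⟨C, ?_⟩ R₀) hval.le
      rintro x ⟨R, rfl⟩
      simpa only [hsup] using hle1 R
    · refine le_ciInf fun R => ?_
      rw [hsup R]
      exact hle1 R
  rw [hinf]
  have hC2 : C ^ 2 = n ^ 2 / p := by
    rw [hCdef, mul_pow, mul_pow, Real.sq_sqrt (by positivity : (0:ℝ) ≤ p)]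
    field_simp
  rw [hC2]
  field_simp

end
end

section
/- Let ε_1,…,ε_n be i.i.d. U([−a,a]) random variables, and let |ε̄_(1)| ≥ |ε̄_(2)| ≥ … ≥ |ε̄_(n)| denote the absolute values |ε_i| sorted in decreasing order. Then for any fixed positive integer K ≤ n and any L > 0, ℙ( |ε̄_(K)|/a < 1 − K(L+1)/n ) ≤ exp( −(KL²/2)/((4/3)L + 1) ) ≤ exp( −(L²/2)/((4/3)L + 1) ). -/
open MeasureTheory ProbabilityTheory
open scoped ENNReal

noncomputable section

/-- The `K`-th largest value among `f 1, …, f n`: the supremum of all thresholds `c` such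
that at least `K` of the values are `≥ c`. -/
def kthLargest {n : ℕ} (f : Fin n → ℝ) (K : ℕ) : ℝ :=
  sSup {c : ℝ | K ≤ (Finset.univ.filter fun i => c ≤ f i).card}

lemma log_ineq (L : ℝ) (hL : 0 < L) :
    (L ^ 2 / 2) / (4 / 3 * L + 1) ≤ L - Real.log (1 + L) := by
  have h1L : (0:ℝ) < 1 + L := by linarith
  have hs : Real.log (1 + L) ≤ Real.sinh (Real.log (1 + L)) :=
    Real.self_le_sinh_iff.2 (Real.log_nonneg (by linarith))
  rw [Real.sinh_eq, Real.exp_log h1L, Real.exp_neg, Real.exp_log h1L] at hs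
  have key : Real.log (1 + L) ≤ ((1 + L) - (1 + L)⁻¹) / 2 := hs
  have hinv : (1 + L)⁻¹ = 1 / (1 + L) := by ring
  rw [hinv] at key
  have hd : (0:ℝ) < 4 / 3 * L + 1 := by linarith
  rw [div_le_iff₀ hd]
  have e1 : ((1 + L) - 1 / (1 + L)) / 2 = L - L ^ 2 / (2 * (1 + L)) := by
    field_simp; ring
  rw [e1] at key
  have h2 : L ^ 2 / (2 * (1 + L)) ≤ L - Real.log (1 + L) := by linarith
  have h3 : L ^ 2 / 2 ≤ (L ^ 2 / (2 * (1 + L))) * (4 / 3 * L + 1) := by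
    rw [div_mul_eq_mul_div, le_div_iff₀ (by linarith)]
    nlinarith [sq_nonneg L]
  nlinarith [mul_le_mul_of_nonneg_right h2 hd.le]

lemma le_kthLargest {n : ℕ} (f : Fin n → ℝ) (K : ℕ) (hK : 1 ≤ K) (hn : 0 < n)
    (s : ℝ) (hs : K ≤ (Finset.univ.filter fun i => s ≤ f i).card) :
    s ≤ kthLargest f K := by
  have hne : (Finset.univ : Finset (Fin n)).Nonempty := ⟨⟨0, hn⟩, Finset.mem_univ _⟩
  have hbdd : BddAbove {c : ℝ | K ≤ (Finset.univ.filter fun i => c ≤ f i).card} := by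
    refine ⟨Finset.univ.sup' hne f, fun c hc => ?_⟩
    have hpos : 0 < (Finset.univ.filter fun i => c ≤ f i).card := lt_of_lt_of_le hK hc
    obtain ⟨i, hi⟩ := Finset.card_pos.1 hpos
    have hci : c ≤ f i := (Finset.mem_filter.1 hi).2
    exact hci.trans (Finset.le_sup' f (Finset.mem_univ i))
  exact le_csSup hbdd hs

lemma unif_exp_integral (a s t : ℝ) (ha : 0 < a) (hs0 : 0 < s) (hsa : s < a) :
    ∫ x, Real.exp (t * (if s ≤ |x| then (1:ℝ) else 0)) ∂(unifIcc a)
      = 1 + ((a - s) / a) * (Real.exp t - 1) := by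
  have hA : MeasurableSet {x : ℝ | s ≤ |x|} :=
    measurableSet_le measurable_const measurable_abs
  have hfun : (fun x => Real.exp (t * (if s ≤ |x| then (1:ℝ) else 0)))
      = fun x => Set.indicator {x : ℝ | s ≤ |x|} (fun _ => Real.exp t - 1) x + 1 := by
    funext x
    by_cases h : s ≤ |x| <;> simp [Set.indicator, h]
  rw [hfun, unifIcc, integral_smul_measure]
  have hfin : Fact (volume (Set.Icc (-a) a) < ⊤) := ⟨measure_Icc_lt_top⟩
  have hint1 : Integrable (Set.indicator {x : ℝ | s ≤ |x|} (fun _ => Real.exp t - 1))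
      (volume.restrict (Set.Icc (-a) a)) := (integrable_const _).indicator hA
  rw [integral_add hint1 (integrable_const 1)]
  rw [integral_indicator hA, setIntegral_const, setIntegral_const]
  have hAinter : {x : ℝ | s ≤ |x|} ∩ Set.Icc (-a) a
      = Set.Icc (-a) (-s) ∪ Set.Icc s a := by
    ext x
    simp only [Set.mem_inter_iff, Set.mem_setOf_eq, Set.mem_Icc, Set.mem_union, le_abs]
    constructor
    · rintro ⟨h1 | h1, h2, h3⟩
      · exact Or.inr ⟨h1, h3⟩
      · exact Or.inl ⟨h2, by linarith⟩
    · rintro (⟨h1, h2⟩ | ⟨h1, h2⟩)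
      · exact ⟨Or.inr (by linarith), h1, by linarith⟩
      · exact ⟨Or.inl h1, by linarith, h2⟩
  have hrestr : (volume.restrict (Set.Icc (-a) a)) {x : ℝ | s ≤ |x|}
      = ENNReal.ofReal (2 * (a - s)) := by
    rw [Measure.restrict_apply hA, hAinter,
      measure_union (by rw [Set.disjoint_left]; rintro x ⟨_, h1⟩ ⟨h2, _⟩; linarith)
        measurableSet_Icc,
      Real.volume_Icc, Real.volume_Icc, ← ENNReal.ofReal_add (by linarith) (by linarith)]
    congr 1; ring
  rw [measureReal_def, measureReal_def, hrestr, Real.volume_Icc]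
  have h2a : (0:ℝ) < 2 * a := by linarith
  rw [ENNReal.toReal_inv, ENNReal.toReal_ofReal h2a.le,
    ENNReal.toReal_ofReal (by linarith), ENNReal.toReal_ofReal (by linarith)]
  have : a - -a = 2 * a := by ring
  rw [this]
  simp only [smul_eq_mul]
  field_simp
  ring

/- STATEMENT 16 (Lemma `lemma:uniform:random:variables:concentration`).
For ε_1,…,ε_n i.i.d. U([-a,a]) and |ε̄_(K)| the K-th largest among |ε_1|,…,|ε_n|:
ℙ(|ε̄_(K)|/a < 1 − K(L+1)/n) ≤ exp(−(KL²/2)/((4/3)L+1)) ≤ exp(−(L²/2)/((4/3)L+1)). -/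
set_option maxHeartbeats 1000000 in
theorem uniform_order_statistic_concentration
    {Ω : Type*} [MeasureSpace Ω] [IsProbabilityMeasure (ℙ : Measure Ω)]
    {n : ℕ} (a L : ℝ) (ha : 0 < a) (hL : 0 < L)
    (K : ℕ) (hK1 : 1 ≤ K) (hKn : K ≤ n)
    (ε : Fin n → Ω → ℝ)
    (hmeas : ∀ i, Measurable (ε i))
    (hiid : iIndepFun ε ℙ)
    (hlaw : ∀ i, Measure.map (ε i) ℙ = unifIcc a) :
    ℙ {ω | kthLargest (fun i => |ε i ω|) K / a < 1 - K * (L + 1) / n} ≤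
        ENNReal.ofReal (Real.exp (-(K * L ^ 2 / 2) / (4 / 3 * L + 1))) ∧
      Real.exp (-(K * L ^ 2 / 2) / (4 / 3 * L + 1)) ≤
        Real.exp (-(L ^ 2 / 2) / (4 / 3 * L + 1)) := by
  have hd : (0:ℝ) < 4 / 3 * L + 1 := by linarith
  have hKR : (1:ℝ) ≤ (K:ℝ) := by exact_mod_cast hK1
  have hn : 0 < n := lt_of_lt_of_le hK1 hKn
  have hnR : (0:ℝ) < (n:ℝ) := by exact_mod_cast hn
  constructor
  swap
  · apply Real.exp_le_exp.2
    rw [div_le_div_iff_of_pos_right hd]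
    nlinarith [sq_nonneg L]
  set p : ℝ := (K:ℝ) * (L + 1) / n with hp_def
  set s : ℝ := a * (1 - p) with hs_def
  set Y : Fin n → Ω → ℝ := fun i ω => if s ≤ |ε i ω| then 1 else 0 with hY_def
  have hsumY : ∀ ω, (∑ i, Y i) ω
      = ((Finset.univ.filter fun i => s ≤ |ε i ω|).card : ℝ) := by
    intro ω
    simp [hY_def, Finset.sum_apply, Finset.sum_boole]
  have hsubset : {ω | kthLargest (fun i => |ε i ω|) K / a < 1 - (K:ℝ) * (L + 1) / n}
      ⊆ {ω | (∑ i, Y i) ω ≤ (K:ℝ) - 1} := by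
    intro ω hω
    simp only [Set.mem_setOf_eq] at hω ⊢
    by_contra hcon
    push_neg at hcon
    rw [hsumY ω] at hcon
    have hcard : K ≤ (Finset.univ.filter fun i => s ≤ |ε i ω|).card := by
      have h' : (K:ℝ) < ((Finset.univ.filter fun i => s ≤ |ε i ω|).card : ℝ) + 1 := by
        linarith
      have : K < (Finset.univ.filter fun i => s ≤ |ε i ω|).card + 1 := by exact_mod_cast h'
      omega
    have hle : s ≤ kthLargest (fun i => |ε i ω|) K :=
      le_kthLargest _ K hK1 hn s hcard
    have hlt : kthLargest (fun i => |ε i ω|) K < s := by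
      have := (div_lt_iff₀ ha).1 hω
      rw [hs_def]; linarith [this]
    linarith
  refine le_trans (measure_mono hsubset) ?_
  by_cases hp1 : 1 - p ≤ 0
  · -- threshold s ≤ 0 : the event is empty
    have hempty : {ω | (∑ i, Y i) ω ≤ (K:ℝ) - 1} = ∅ := by
      ext ω
      simp only [Set.mem_setOf_eq, Set.mem_empty_iff_false, iff_false, not_le]
      rw [hsumY ω]
      have hall : (Finset.univ.filter fun i => s ≤ |ε i ω|) = Finset.univ := by
        refine Finset.filter_true_of_mem fun i _ => ?_
        have : s ≤ 0 := by rw [hs_def]; nlinarith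
        exact this.trans (abs_nonneg _)
      rw [hall, Finset.card_univ, Fintype.card_fin]
      have : (K:ℝ) ≤ (n:ℝ) := by exact_mod_cast hKn
      linarith
    rw [hempty]
    simp
  · push_neg at hp1
    have hp0 : 0 < p := by
      rw [hp_def]
      apply div_pos (mul_pos (by linarith) (by linarith)) hnR
    have hs0 : 0 < s := by rw [hs_def]; nlinarith
    have hsa : s < a := by rw [hs_def]; nlinarith
    set g : ℝ → ℝ := fun x => if s ≤ |x| then 1 else 0 with hg_def
    have hA : MeasurableSet {x : ℝ | s ≤ |x|} :=
      measurableSet_le measurable_const measurable_abs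
    have hg : Measurable g := Measurable.ite hA measurable_const measurable_const
    have hYmeas : ∀ i, Measurable (Y i) := fun i => hg.comp (hmeas i)
    have hYindep : iIndepFun Y ℙ :=
      hiid.comp (fun _ => g) (fun _ => hg)
    set t : ℝ := -Real.log (1 + L) with ht_def
    have hlog0 : 0 ≤ Real.log (1 + L) := Real.log_nonneg (by linarith)
    have ht : t ≤ 0 := neg_nonpos.2 hlog0
    have het : Real.exp t = (1 + L)⁻¹ := by
      rw [ht_def, Real.exp_neg, Real.exp_log (by linarith)]
    -- the mgf of each Y i
    have hmgf : ∀ i, mgf (Y i) ℙ t = 1 + p * (Real.exp t - 1) := by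
      intro i
      have hsm : AEStronglyMeasurable (fun x => Real.exp (t * g x))
          (Measure.map (ε i) ℙ) := ((hg.const_mul t).exp).aestronglyMeasurable
      have h1 : mgf (Y i) ℙ t = ∫ x, Real.exp (t * g x) ∂(Measure.map (ε i) ℙ) :=
        (integral_map (hmeas i).aemeasurable hsm).symm
      rw [h1, hlaw i, hg_def]
      rw [unif_exp_integral a s t ha hs0 hsa]
      have : (a - s) / a = p := by
        rw [hs_def]; field_simp; ring
      rw [this]
    have hmgfsum : mgf (∑ i, Y i) ℙ t = (1 + p * (Real.exp t - 1)) ^ n := by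
      rw [hYindep.mgf_sum hYmeas]
      simp [hmgf, Finset.prod_const, Finset.card_univ]
    -- integrability
    have hYb : ∀ ω, 0 ≤ (∑ i, Y i) ω ∧ (∑ i, Y i) ω ≤ n := by
      intro ω
      rw [hsumY ω]
      constructor
      · positivity
      · have := Finset.card_filter_le (Finset.univ : Finset (Fin n))
          (fun i => s ≤ |ε i ω|)
        rw [Finset.card_univ, Fintype.card_fin] at this
        exact_mod_cast this
    have hsum_meas : Measurable (∑ i, Y i) := by
      have he : (∑ i : Fin n, Y i) = fun ω => ∑ i, Y i ω := by
        funext ω; simp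
      rw [he]
      exact Finset.measurable_sum _ fun i _ => hYmeas i
    have hint : Integrable (fun ω => Real.exp (t * (∑ i, Y i) ω)) ℙ := by
      refine Integrable.mono' (integrable_const (Real.exp (|t| * n)))
        ((hsum_meas.const_mul t).exp).aestronglyMeasurable
        (Filter.Eventually.of_forall fun ω => ?_)
      rw [Real.norm_eq_abs, Real.abs_exp]
      apply Real.exp_le_exp.2
      obtain ⟨h0, hn'⟩ := hYb ω
      calc t * (∑ i, Y i) ω ≤ |t * (∑ i, Y i) ω| := le_abs_self _
        _ = |t| * (∑ i, Y i) ω := by rw [abs_mul, abs_of_nonneg h0]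
        _ ≤ |t| * n := mul_le_mul_of_nonneg_left hn' (abs_nonneg t)
    -- Chernoff
    have hchern := measure_le_le_exp_mul_mgf ((K:ℝ) - 1) ht hint
    rw [hmgfsum] at hchern
    -- bound the Chernoff expression
    have hnp : (n:ℝ) * p = (K:ℝ) * (L + 1) := by
      rw [hp_def]; field_simp
    have hbase : 0 ≤ 1 + p * (Real.exp t - 1) := by
      have h1 : p < 1 := by linarith
      nlinarith [Real.exp_pos t]
    have hstep1 : (1 + p * (Real.exp t - 1)) ^ n
        ≤ Real.exp ((n:ℝ) * (p * (Real.exp t - 1))) := by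
      calc (1 + p * (Real.exp t - 1)) ^ n
          ≤ (Real.exp (p * (Real.exp t - 1))) ^ n := by
            apply pow_le_pow_left₀ hbase
            linarith [Real.add_one_le_exp (p * (Real.exp t - 1))]
        _ = Real.exp ((n:ℝ) * (p * (Real.exp t - 1))) := (Real.exp_nat_mul _ n).symm
    have hexpo : -t * ((K:ℝ) - 1) + (n:ℝ) * (p * (Real.exp t - 1))
        ≤ -((K:ℝ) * L ^ 2 / 2) / (4 / 3 * L + 1) := by
      have h1 : (n:ℝ) * (p * (Real.exp t - 1)) = -((K:ℝ) * L) := by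
        rw [← mul_assoc, hnp, het]
        have h1L : (1:ℝ) + L ≠ 0 := by linarith
        field_simp
        ring
      rw [h1, ht_def]
      have hlogle := log_ineq L hL
      have hKmul : (K:ℝ) * ((L ^ 2 / 2) / (4 / 3 * L + 1))
          ≤ (K:ℝ) * (L - Real.log (1 + L)) :=
        mul_le_mul_of_nonneg_left hlogle (by linarith)
      have heq : -((K:ℝ) * L ^ 2 / 2) / (4 / 3 * L + 1)
          = -((K:ℝ) * ((L ^ 2 / 2) / (4 / 3 * L + 1))) := by ring
      rw [heq]
      have h2 : Real.log (1 + L) * ((K:ℝ) - 1) ≤ Real.log (1 + L) * (K:ℝ) :=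
        mul_le_mul_of_nonneg_left (by linarith) hlog0
      linarith [h2, hKmul]
    -- conclude
    have hreal : (ℙ {ω | (∑ i, Y i) ω ≤ (K:ℝ) - 1}).toReal
        ≤ Real.exp (-((K:ℝ) * L ^ 2 / 2) / (4 / 3 * L + 1)) := by
      refine hchern.trans ?_
      calc Real.exp (-t * ((K:ℝ) - 1)) * (1 + p * (Real.exp t - 1)) ^ n
          ≤ Real.exp (-t * ((K:ℝ) - 1))
            * Real.exp ((n:ℝ) * (p * (Real.exp t - 1))) := by
            apply mul_le_mul_of_nonneg_left hstep1 (Real.exp_pos _).le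
        _ = Real.exp (-t * ((K:ℝ) - 1) + (n:ℝ) * (p * (Real.exp t - 1))) :=
            (Real.exp_add _ _).symm
        _ ≤ Real.exp (-((K:ℝ) * L ^ 2 / 2) / (4 / 3 * L + 1)) :=
            Real.exp_le_exp.2 hexpo
    rw [← ENNReal.ofReal_toReal (measure_ne_top ℙ {ω | (∑ i, Y i) ω ≤ (K:ℝ) - 1})]
    exact ENNReal.ofReal_le_ofReal hreal

end
end
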